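/- arXiv:math-ph/9908027 — 6 statements merged into one kernel-verified Lean document; each statement's English description precedes it below -/
import Mathlib

section
/- Properties of the zero-energy scattering solution: if v ≥ 0 and u solves -u'' + ½vu = 0 with u(0)=0, u normalized so that u'(r) → 1 at infinity, and a is the scattering length, then for all r: u(r) ≤ r, u(r) ≥ r - a for r > a, u(r) ≥ 0, 0 ≤ u'(r) ≤ 1, and u'(r) ≥ 1 - a/r for r > a. -/
open Filter

/-- Properties of the zero-energy scattering solution: `u(r) ≤ r`, `u ≥ 0`,
`0 ≤ u' ≤ 1`, and for `r > a`, `u(r) ≥ r - a` and `u'(r) ≥ 1 - a/r`. -/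
theorem stmt_4 (v u : ℝ → ℝ) (a : ℝ) (ha : 0 ≤ a)
    (hv : ∀ r, 0 < r → 0 ≤ v r)
    (hu : ContDiff ℝ 2 u) (h0 : u 0 = 0)
    (hODE : ∀ r, 0 < r → deriv (deriv u) r = (1 / 2) * v r * u r)
    (hnorm : Tendsto (deriv u) atTop (nhds 1))
    (hscat : Tendsto (fun r => r - u r / deriv u r) atTop (nhds a)) :
    ∀ r, 0 < r →
      u r ≤ r ∧ 0 ≤ u r ∧ 0 ≤ deriv u r ∧ deriv u r ≤ 1 ∧
      (a < r → r - a ≤ u r ∧ 1 - a / r ≤ deriv u r) := by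
  have hud : Differentiable ℝ u := hu.differentiable (by norm_num)
  have hu_cont : Continuous u := hud.continuous
  have hu2 : ContDiff ℝ 1 (deriv u) :=
    (contDiff_succ_iff_deriv.mp (by exact_mod_cast hu : ContDiff ℝ ((1:WithTop ℕ∞) + 1) u)).2.2
  have hu'd : Differentiable ℝ (deriv u) := hu2.differentiable (by norm_num)
  have hu'cont : Continuous (deriv u) := hu'd.continuous
  -- u is eventually positive
  have hev : ∀ᶠ r in atTop, 0 < u r := by
    have h1 : ∀ᶠ r in atTop, (1:ℝ)/2 < deriv u r :=
      hnorm.eventually (eventually_gt_nhds (by norm_num))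
    have h2 : ∀ᶠ r in atTop, r - u r / deriv u r < a + 1 :=
      hscat.eventually (eventually_lt_nhds (by linarith))
    filter_upwards [h1, h2, eventually_gt_atTop (a+1)] with r hr1 hr2 hr3
    have hne : deriv u r ≠ 0 := by positivity
    have hq : 0 < u r / deriv u r := by linarith
    have := mul_pos hq (by linarith : (0:ℝ) < deriv u r)
    rwa [div_mul_cancel₀ _ hne] at this
  -- u is nonnegative
  have hu_nonneg : ∀ r, 0 ≤ r → 0 ≤ u r := by
    intro r0 hr0
    by_contra hneg
    push_neg at hneg
    have hr0' : 0 < r0 := by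
      rcases hr0.eq_or_lt with h | h
      · rw [← h, h0] at hneg; exact absurd hneg (lt_irrefl 0)
      · exact h
    obtain ⟨R, hRr0, hRpos⟩ : ∃ R, r0 ≤ R ∧ 0 < u R := by
      rcases (hev.and (eventually_ge_atTop r0)).exists with ⟨R, h1, h2⟩
      exact ⟨R, h2, h1⟩
    set S₁ : Set ℝ := Set.Icc 0 r0 ∩ {r | 0 ≤ u r} with hS₁def
    have hS₁c : IsClosed S₁ := isClosed_Icc.inter (isClosed_le continuous_const hu_cont)
    have hS₁ne : S₁.Nonempty := ⟨0, ⟨le_rfl, hr0⟩, h0.ge⟩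
    have hS₁bdd : BddAbove S₁ := ⟨r0, fun x hx => hx.1.2⟩
    set l := sSup S₁ with hl
    have hlmem : l ∈ S₁ := hS₁c.csSup_mem hS₁ne hS₁bdd
    have hl0 : 0 ≤ l := hlmem.1.1
    have hlr0 : l < r0 := lt_of_le_of_ne hlmem.1.2 (fun h => by
      have := hlmem.2; rw [h] at this; exact absurd hneg (not_lt.mpr this))
    set S₂ : Set ℝ := Set.Icc r0 R ∩ {r | 0 ≤ u r} with hS₂def
    have hS₂c : IsClosed S₂ := isClosed_Icc.inter (isClosed_le continuous_const hu_cont)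
    have hS₂ne : S₂.Nonempty := ⟨R, ⟨hRr0, le_rfl⟩, hRpos.le⟩
    have hS₂bdd : BddBelow S₂ := ⟨r0, fun x hx => hx.1.1⟩
    set r1 := sInf S₂ with hr1
    have hr1mem : r1 ∈ S₂ := hS₂c.csInf_mem hS₂ne hS₂bdd
    have hr0r1 : r0 < r1 := lt_of_le_of_ne hr1mem.1.1 (fun h => by
      have := hr1mem.2; rw [← h] at this; exact absurd hneg (not_lt.mpr this))
    -- u < 0 on (l, r1)
    have huneg : ∀ x, l < x → x < r1 → u x < 0 := by
      intro x hx1 hx2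
      by_contra hge
      push_neg at hge
      rcases le_total x r0 with hx | hx
      · exact absurd (le_csSup hS₁bdd ⟨⟨hl0.trans hx1.le, hx⟩, hge⟩) (not_le.mpr hx1)
      · exact absurd (csInf_le hS₂bdd ⟨⟨hx, (hx2.trans_le hr1mem.1.2).le⟩, hge⟩)
          (not_le.mpr hx2)
    -- deriv u is antitone on [l, r1]
    have hanti : AntitoneOn (deriv u) (Set.Icc l r1) := by
      apply antitoneOn_of_deriv_nonpos (convex_Icc _ _) hu'cont.continuousOn
        (hu'd.differentiableOn)
      intro x hx
      rw [interior_Icc] at hx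
      have hxpos : 0 < x := lt_of_le_of_lt hl0 hx.1
      rw [hODE x hxpos]
      have h1 := huneg x hx.1 hx.2
      have h2 := hv x hxpos
      nlinarith
    -- MVT on [l, r0] and [r0, r1]
    obtain ⟨c, hc, hc'⟩ := exists_deriv_eq_slope u hlr0 hu_cont.continuousOn
      hud.differentiableOn
    obtain ⟨d, hd, hd'⟩ := exists_deriv_eq_slope u hr0r1 hu_cont.continuousOn
      hud.differentiableOn
    have hul : (0:ℝ) ≤ u l := hlmem.2
    have hur1 : (0:ℝ) ≤ u r1 := hr1mem.2
    have hcneg : deriv u c < 0 := by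
      rw [hc']
      apply div_neg_of_neg_of_pos _ (by linarith [hc.1, hc.2])
      linarith
    have hdpos : 0 < deriv u d := by
      rw [hd']
      apply div_pos _ (by linarith [hd.1, hd.2])
      linarith
    have : deriv u d ≤ deriv u c :=
      hanti ⟨hc.1.le, by linarith [hc.2, hd.1, hd.2]⟩
        ⟨by linarith [hc.1, hd.1], hd.2.le⟩ (by linarith [hc.2, hd.1])
    linarith
  -- deriv u is monotone on [0, ∞)
  have hmono : MonotoneOn (deriv u) (Set.Ici 0) := by
    apply monotoneOn_of_deriv_nonneg (convex_Ici 0) hu'cont.continuousOn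
      hu'd.differentiableOn
    intro x hx
    rw [interior_Ici] at hx
    rw [hODE x hx]
    have h1 := hu_nonneg x hx.le
    have h2 := hv x hx
    nlinarith
  -- deriv u ≤ 1
  have hle1 : ∀ r, 0 ≤ r → deriv u r ≤ 1 := by
    intro r hr
    apply ge_of_tendsto hnorm
    filter_upwards [eventually_ge_atTop r] with s hs
    exact hmono hr (hr.trans hs) hs
  -- deriv u ≥ 0 for r > 0
  have hd0 : ∀ r, 0 < r → 0 ≤ deriv u r := by
    intro r hr
    by_contra hlt
    push_neg at hlt
    obtain ⟨c, hc, hc'⟩ := exists_deriv_eq_slope u hr hu_cont.continuousOn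
      hud.differentiableOn
    have h1 : 0 ≤ deriv u c := by
      rw [hc', h0, sub_zero, sub_zero]
      exact div_nonneg (hu_nonneg r hr.le) hr.le
    have h2 : deriv u c ≤ deriv u r := hmono hc.1.le hr.le hc.2.le
    linarith
  -- u r ≤ r
  have huler : ∀ r, 0 < r → u r ≤ r := by
    intro r hr
    obtain ⟨c, hc, hc'⟩ := exists_deriv_eq_slope u hr hu_cont.continuousOn
      hud.differentiableOn
    have h1 : deriv u c ≤ 1 := hle1 c hc.1.le
    rw [hc', h0, sub_zero, sub_zero, div_le_one hr] at h1
    exact h1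
  -- the function w = r * u' - u
  set w : ℝ → ℝ := fun r => r * deriv u r - u r with hwdef
  have hwderiv : ∀ x, HasDerivAt w (x * deriv (deriv u) x) x := by
    intro x
    have h1 := (hasDerivAt_id x).mul (hu'd x).hasDerivAt
    have h2 := (hud x).hasDerivAt
    refine (h1.sub h2).congr_deriv ?_
    simp [id_eq]
  have hwc : Continuous w := (continuous_id.mul hu'cont).sub hu_cont
  have hwmono : MonotoneOn w (Set.Ici 0) := by
    apply monotoneOn_of_deriv_nonneg (convex_Ici 0) hwc.continuousOn
      (fun x _ => ((hwderiv x).differentiableAt).differentiableWithinAt)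
    intro x hx
    rw [interior_Ici] at hx
    rw [(hwderiv x).deriv, hODE x hx]
    have hx' : (0:ℝ) < x := hx
    have h1 := hu_nonneg x hx.le
    have h2 := hv x hx
    exact mul_nonneg hx'.le (mul_nonneg (mul_nonneg (by norm_num) h2) h1)
  have hw0 : w 0 = 0 := by simp [hwdef, h0]
  have hwtendsto : Tendsto w atTop (nhds a) := by
    have h1 : Tendsto (fun r => deriv u r * (r - u r / deriv u r)) atTop (nhds (1 * a)) :=
      hnorm.mul hscat
    rw [one_mul] at h1
    apply h1.congr'
    filter_upwards [hnorm.eventually (eventually_gt_nhds (by norm_num : (1:ℝ)/2 < 1))]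
      with r hr
    have hne : deriv u r ≠ 0 := by positivity
    simp only [hwdef]
    field_simp
  have hwle : ∀ r, 0 ≤ r → w r ≤ a := by
    intro r hr
    apply ge_of_tendsto hwtendsto
    filter_upwards [eventually_ge_atTop r] with s hs
    exact hwmono hr (hr.trans hs) hs
  have hwge : ∀ r, 0 ≤ r → 0 ≤ w r := by
    intro r hr
    have := hwmono Set.self_mem_Ici hr hr
    rwa [hw0] at this
  -- the function g = (u + a) / r
  set g : ℝ → ℝ := fun r => (u r + a) / r with hgdef
  have hganti : AntitoneOn g (Set.Ioi 0) := by
    apply antitoneOn_of_deriv_nonpos (convex_Ioi 0)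
    · exact ContinuousOn.div ((hu_cont.add continuous_const).continuousOn)
        continuousOn_id (fun x hx => ne_of_gt hx)
    · rw [interior_Ioi]
      intro x hx
      exact (((hud x).add_const a).div (differentiableAt_id) (ne_of_gt hx)).differentiableWithinAt
    · rw [interior_Ioi]
      intro x hx
      have hne : (x:ℝ) ≠ 0 := ne_of_gt hx
      have hder : HasDerivAt g ((deriv u x * x - (u x + a) * 1) / x ^ 2) x :=
        (((hud x).hasDerivAt.add_const a).div (hasDerivAt_id x) hne)
      rw [hder.deriv]
      apply div_nonpos_of_nonpos_of_nonneg _ (sq_nonneg x)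
      have h1 := hwle x hx.le
      simp only [hwdef] at h1
      nlinarith
  have hg1 : Tendsto g atTop (nhds 1) := by
    have h3 : Tendsto (fun r => (a - w r) / r) atTop (nhds 0) := by
      have hub : Tendsto (fun r : ℝ => a / r) atTop (nhds 0) :=
        tendsto_const_nhds.div_atTop tendsto_id
      apply tendsto_of_tendsto_of_tendsto_of_le_of_le' tendsto_const_nhds hub
      · filter_upwards [eventually_gt_atTop 0] with r hr
        exact div_nonneg (by linarith [hwle r hr.le]) hr.le
      · filter_upwards [eventually_gt_atTop 0] with r hr
        rw [div_le_div_iff_of_pos_right hr]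
        linarith [hwge r hr.le]
    have h4 := hnorm.add h3
    rw [add_zero] at h4
    apply h4.congr'
    filter_upwards [eventually_gt_atTop 0] with r hr
    have hne : (r:ℝ) ≠ 0 := ne_of_gt hr
    simp only [hgdef, hwdef]
    field_simp
    ring
  have hglb : ∀ r, 0 < r → 1 ≤ g r := by
    intro r hr
    apply le_of_tendsto hg1
    filter_upwards [eventually_ge_atTop r] with s hs
    exact hganti (Set.mem_Ioi.mpr hr) (Set.mem_Ioi.mpr (hr.trans_le hs)) hs
  -- assemble
  intro r hr
  have hwger := hwge r hr.le
  have hra : r - a ≤ u r := by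
    have := hglb r hr
    rw [hgdef, le_div_iff₀ hr, one_mul] at this
    linarith
  refine ⟨huler r hr, hu_nonneg r hr.le, hd0 r hr, hle1 r hr.le, fun _ => ⟨hra, ?_⟩⟩
  have h5 : r - a ≤ r * deriv u r := by
    simp only [hwdef] at hwger
    linarith
  have h6 : (1 - deriv u r) * r ≤ a := by nlinarith
  have h7 : 1 - deriv u r ≤ a / r := (le_div_iff₀ hr).mpr h6
  linarith
end

section
/- Spruch–Rosenberg inequality: for a nonnegative spherically symmetric potential v, the scattering length satisfies a ≤ ½ ∫₀^∞ v(r) r² dr. -/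
open Filter MeasureTheory Set Topology

theorem aux_pos (v u : ℝ → ℝ) (a : ℝ)
    (hv : ∀ r, 0 < r → 0 ≤ v r)
    (hu : ContDiff ℝ 2 u) (h0 : u 0 = 0)
    (hODE : ∀ r, 0 < r → deriv (deriv u) r = (1 / 2) * v r * u r)
    (hnorm : Tendsto (deriv u) atTop (nhds 1))
    (hscat : Tendsto (fun r => r - u r / deriv u r) atTop (nhds a))
    (hpos : ∀ r, 0 < r → 0 < deriv u r) :
    ENNReal.ofReal a ≤ 2⁻¹ * ∫⁻ r in Set.Ioi (0 : ℝ), ENNReal.ofReal (v r * r ^ 2) := by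
  have hud : Differentiable ℝ u := hu.differentiable (by norm_num)
  have hu1 : ContDiff ℝ 1 (deriv u) :=
    (contDiff_succ_iff_deriv.mp (by norm_num at hu ⊢; exact hu : ContDiff ℝ (1+1) u)).2.2
  have hud' : Differentiable ℝ (deriv u) := hu1.differentiable (by norm_num)
  have hcont2 : Continuous (deriv (deriv u)) := hu1.continuous_deriv (by norm_num)
  -- u > 0 on Ioi 0
  have humono : StrictMonoOn u (Ici 0) := by
    apply strictMonoOn_of_deriv_pos (convex_Ici 0) hud.continuous.continuousOn
    intro x hx
    rw [interior_Ici] at hx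
    exact hpos x hx
  have hupos : ∀ r, 0 < r → 0 < u r := fun r hr => by
    have := humono (self_mem_Ici) (le_of_lt hr : (0:ℝ) ≤ r) hr
    rwa [h0] at this
  -- u'' ≥ 0 on Ioi 0
  have hu''0 : ∀ r, 0 < r → 0 ≤ deriv (deriv u) r := fun r hr => by
    rw [hODE r hr]
    have := hupos r hr; have := hv r hr; positivity
  -- u' monotone on Ioi 0
  have hu'mono : MonotoneOn (deriv u) (Ioi 0) := by
    apply monotoneOn_of_deriv_nonneg (convex_Ioi 0) hud'.continuous.continuousOn
      (hud'.differentiableOn.mono interior_subset)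
    intro x hx
    rw [interior_Ioi] at hx
    exact hu''0 x hx
  -- u' ≤ 1
  have hu'le1 : ∀ r, 0 < r → deriv u r ≤ 1 := fun r hr => by
    apply ge_of_tendsto hnorm
    filter_upwards [Ici_mem_atTop r] with s hs
    exact hu'mono hr (lt_of_lt_of_le hr hs) hs
  -- u r ≤ r * u' r
  have hukey : ∀ r, 0 < r → u r ≤ r * deriv u r := fun r hr => by
    obtain ⟨c, hc, hceq⟩ := exists_deriv_eq_slope u hr hud.continuous.continuousOn
      (hud.differentiableOn)
    have : u r = r * deriv u c := by
      rw [hceq]; field_simp [h0, ne_of_gt hr]; rw [h0]; ring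
    rw [this]
    exact mul_le_mul_of_nonneg_left (hu'mono hc.1 hr hc.2.le) hr.le

  set L := ∫⁻ r in Set.Ioi (0:ℝ), ENNReal.ofReal (v r * r ^ 2) with hLdef
  rcases eq_or_ne L ⊤ with hT | hT
  · rw [hT, ENNReal.mul_top (by norm_num)]; exact le_top
  set w : ℝ → ℝ := fun s => deriv (deriv u) s * s ^ 2 / u s with hwdef
  have hwcont : ContinuousOn w (Ioi 0) := by
    apply ContinuousOn.div ((hcont2.continuousOn).mul (continuousOn_pow 2))
      hud.continuous.continuousOn
    intro x hx; exact ne_of_gt (hupos x hx)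
  have hw0 : ∀ s ∈ Ioi (0:ℝ), 0 ≤ w s := by
    intro s hs
    have h1 := hu''0 s hs
    have h2 := hupos s hs
    positivity
  have hlw : (∫⁻ s in Ioi (0:ℝ), ENNReal.ofReal (w s)) = 2⁻¹ * L := by
    rw [hLdef, ← lintegral_const_mul' _ _ (by norm_num : (2⁻¹:ENNReal) ≠ ⊤)]
    apply setLIntegral_congr_fun measurableSet_Ioi
    intro s hs
    show ENNReal.ofReal (w s) = 2⁻¹ * ENNReal.ofReal (v s * s ^ 2)
    have h2 := hupos s hs
    have : w s = 2⁻¹ * (v s * s ^ 2) := by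
      rw [hwdef]; simp only; rw [hODE s hs]; field_simp
    rw [this, ENNReal.ofReal_mul (by norm_num)]
    congr 1
    rw [show ((2:ℝ))⁻¹ = (2:ℝ)⁻¹ from rfl, ENNReal.ofReal_inv_of_pos two_pos]
    norm_num
  have hg : ∀ ε > (0:ℝ), ∀ R, ε ≤ R →
      (R - u R / deriv u R) ≤ ε + (2⁻¹ * L).toReal := by
    intro ε hε R hR
    set g : ℝ → ℝ := fun s => u s * deriv (deriv u) s / (deriv u s) ^ 2 with hgdef
    have hIcc : Icc ε R ⊆ Ioi 0 := fun x hx => lt_of_lt_of_le hε hx.1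
    have hdh : ∀ x ∈ Icc ε R, HasDerivAt (fun r => r - u r / deriv u r) (g x) x := by
      intro x hx
      have hx0 : 0 < x := hIcc hx
      have h1 : HasDerivAt u (deriv u x) x := hud.differentiableAt.hasDerivAt
      have h2 : HasDerivAt (deriv u) (deriv (deriv u) x) x := hud'.differentiableAt.hasDerivAt
      have h3 := h1.div h2 (ne_of_gt (hpos x hx0))
      have h4 := (hasDerivAt_id x).sub h3
      replace h4 : HasDerivAt (fun r => r - u r / deriv u r) _ x := h4
      convert h4 using 1
      have h5 := ne_of_gt (hpos x hx0)
      show u x * deriv (deriv u) x / (deriv u x) ^ 2 = _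
      field_simp
      ring
    have hgcont : ContinuousOn g (Icc ε R) := by
      apply ContinuousOn.div (hud.continuous.continuousOn.mul hcont2.continuousOn)
        ((hud'.continuous.continuousOn).pow 2)
      intro x hx
      exact pow_ne_zero 2 (ne_of_gt (hpos x (hIcc hx)))
    have hwcontI : ContinuousOn w (Icc ε R) := hwcont.mono hIcc
    have hftc : ∫ s in ε..R, g s = (R - u R / deriv u R) - (ε - u ε / deriv u ε) := by
      apply intervalIntegral.integral_eq_sub_of_hasDerivAt
      · intro x hx; rw [uIcc_of_le hR] at hx; exact hdh x hx
      · apply ContinuousOn.intervalIntegrable; rwa [uIcc_of_le hR]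
    have hmono : ∫ s in ε..R, g s ≤ ∫ s in ε..R, w s := by
      apply intervalIntegral.integral_mono_on hR
        (ContinuousOn.intervalIntegrable (by rw [uIcc_of_le hR]; exact hgcont))
        (ContinuousOn.intervalIntegrable (by rw [uIcc_of_le hR]; exact hwcontI))
      intro x hx
      have hx0 : 0 < x := hIcc hx
      have h1 : 0 ≤ deriv (deriv u) x := hu''0 x hx0
      have h2 : 0 < u x := hupos x hx0
      have h3 : 0 < deriv u x := hpos x hx0
      have h4 : u x ≤ x * deriv u x := hukey x hx0
      rw [hgdef, hwdef]
      simp only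
      rw [div_le_div_iff₀ (by positivity) (by positivity)]
      nlinarith [mul_le_mul h4 h4 h2.le (by positivity : (0:ℝ) ≤ x * deriv u x)]
    have hIR : IntegrableOn w (Ioc ε R) := by
      exact (hwcontI.integrableOn_Icc).mono_set Ioc_subset_Icc_self
    have hOF : ENNReal.ofReal (∫ s in Ioc ε R, w s) = ∫⁻ s in Ioc ε R, ENNReal.ofReal (w s) := by
      apply ofReal_integral_eq_lintegral_ofReal hIR
      filter_upwards [ae_restrict_mem measurableSet_Ioc] with x hx
      exact hw0 x (lt_trans hε hx.1)
    have hle2 : (∫⁻ s in Ioc ε R, ENNReal.ofReal (w s)) ≤ 2⁻¹ * L := by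
      rw [← hlw]
      exact lintegral_mono_set (fun x hx => lt_trans hε hx.1)
    have hfin : 2⁻¹ * L ≠ ⊤ := ENNReal.mul_ne_top (by norm_num) hT
    have hwR : ∫ s in ε..R, w s ≤ (2⁻¹ * L).toReal := by
      rw [intervalIntegral.integral_of_le hR]
      have h6 : 0 ≤ ∫ s in Ioc ε R, w s := by
        apply setIntegral_nonneg measurableSet_Ioc
        intro x hx; exact hw0 x (lt_trans hε hx.1)
      calc ∫ s in Ioc ε R, w s = (ENNReal.ofReal (∫ s in Ioc ε R, w s)).toReal := by
              rw [ENNReal.toReal_ofReal h6]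
        _ ≤ (2⁻¹ * L).toReal := ENNReal.toReal_mono hfin (hOF ▸ hle2)
    have hhε : ε - u ε / deriv u ε ≤ ε := by
      have := hupos ε hε
      have := hpos ε hε
      have : 0 ≤ u ε / deriv u ε := by positivity
      linarith
    linarith [hmono.trans hwR, hftc]
  have ha : a ≤ (2⁻¹ * L).toReal := by
    apply le_of_forall_pos_le_add
    intro ε hε
    apply le_of_tendsto hscat
    filter_upwards [Ici_mem_atTop ε] with R hR
    rw [add_comm]
    exact hg ε hε R hR
  calc ENNReal.ofReal a ≤ ENNReal.ofReal ((2⁻¹ * L).toReal) := ENNReal.ofReal_le_ofReal ha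
    _ = 2⁻¹ * L := ENNReal.ofReal_toReal (ENNReal.mul_ne_top (by norm_num) hT)


theorem aux_deg (v u : ℝ → ℝ)
    (hv : ∀ r, 0 < r → 0 ≤ v r)
    (hu : ContDiff ℝ 2 u) (h0 : u 0 = 0)
    (hODE : ∀ r, 0 < r → deriv (deriv u) r = (1 / 2) * v r * u r)
    (hnorm : Tendsto (deriv u) atTop (nhds 1))
    (hex : ∃ r, 0 < r ∧ deriv u r ≤ 0) :
    (∫⁻ r in Set.Ioi (0:ℝ), ENNReal.ofReal (v r * r ^ 2)) = ⊤ := by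
  by_contra hT
  obtain ⟨r₀, hr₀, hr₀'⟩ := hex
  have hud : Differentiable ℝ u := hu.differentiable (by norm_num)
  have hu1 : ContDiff ℝ 1 (deriv u) :=
    (contDiff_succ_iff_deriv.mp (by norm_num at hu ⊢; exact hu : ContDiff ℝ (1+1) u)).2.2
  have hud' : Differentiable ℝ (deriv u) := hu1.differentiable (by norm_num)
  have hcont2 : Continuous (deriv (deriv u)) := hu1.continuous_deriv (by norm_num)
  set S := {r : ℝ | r₀ ≤ r ∧ deriv u r ≤ 0} with hSdef
  have hSclosed : IsClosed S := by
    have : S = Ici r₀ ∩ (deriv u) ⁻¹' (Iic 0) := rfl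
    rw [this]
    exact isClosed_Ici.inter (isClosed_Iic.preimage hud'.continuous)
  have hSne : S.Nonempty := ⟨r₀, le_refl _, hr₀'⟩
  have hSbdd : BddAbove S := by
    have h1 : ∀ᶠ r in atTop, (1/2:ℝ) < deriv u r :=
      hnorm.eventually (eventually_gt_nhds (by norm_num))
    obtain ⟨B, hB⟩ := h1.exists_forall_of_atTop
    refine ⟨B, fun x hx => ?_⟩
    by_contra h
    push_neg at h
    exact absurd (hB x h.le) (by linarith [hx.2])
  set T := sSup S with hTdef
  have hTS : T ∈ S := hSclosed.csSup_mem hSne hSbdd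
  have hT0 : 0 < T := lt_of_lt_of_le hr₀ hTS.1
  have hu'pos : ∀ r, T < r → 0 < deriv u r := by
    intro r hr
    by_contra h
    push_neg at h
    exact absurd (le_csSup hSbdd ⟨le_trans hTS.1 hr.le, h⟩) (not_le.mpr hr)
  have hu'T : deriv u T = 0 := by
    refine le_antisymm hTS.2 ?_
    have h1 : Tendsto (deriv u) (𝓝[>] T) (nhds (deriv u T)) :=
      (hud'.continuous.tendsto T).mono_left nhdsWithin_le_nhds
    apply ge_of_tendsto h1
    filter_upwards [self_mem_nhdsWithin] with x hx
    exact (hu'pos x hx).le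
  have humono : StrictMonoOn u (Ici T) := by
    apply strictMonoOn_of_deriv_pos (convex_Ici T) hud.continuous.continuousOn
    intro x hx
    rw [interior_Ici] at hx
    exact hu'pos x hx
  -- u T ≥ 0
  have huT0 : 0 ≤ u T := by
    by_contra h
    push_neg at h
    obtain ⟨ε, hε, hball⟩ := Metric.eventually_nhds_iff.mp
      ((hud.continuous.tendsto T).eventually (eventually_lt_nhds h : ∀ᶠ y in nhds (u T), y < 0))
    have hneg : ∀ x ∈ Icc T (T + ε/2), u x < 0 := by
      intro x hx
      apply hball
      rw [Real.dist_eq, abs_lt]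
      constructor <;> [linarith [hx.1]; linarith [hx.2]]
    have hanti : AntitoneOn (deriv u) (Icc T (T + ε/2)) := by
      apply antitoneOn_of_deriv_nonpos (convex_Icc _ _) hud'.continuous.continuousOn
        (hud'.differentiableOn.mono interior_subset)
      intro x hx
      rw [interior_Icc] at hx
      rw [hODE x (lt_trans hT0 hx.1)]
      have h1 := hv x (lt_trans hT0 hx.1)
      have h2 := (hneg x (Ioo_subset_Icc_self hx)).le
      nlinarith
    have hmem : T + ε/4 ∈ Icc T (T + ε/2) := by constructor <;> linarith
    have := hanti (left_mem_Icc.mpr (by linarith)) hmem (by linarith)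
    rw [hu'T] at this
    exact absurd (hu'pos (T + ε/4) (by linarith)) (by linarith)
  -- u T ≤ 0
  have huT0' : u T ≤ 0 := by
    by_contra h
    push_neg at h
    set S2 := {r : ℝ | 0 ≤ r ∧ r ≤ T ∧ u r ≤ 0} with hS2def
    have hS2closed : IsClosed S2 := by
      have : S2 = Ici 0 ∩ (Iic T ∩ u ⁻¹' (Iic 0)) := by
        ext x; simp [hS2def, and_assoc]
      rw [this]
      exact isClosed_Ici.inter (isClosed_Iic.inter (isClosed_Iic.preimage hud.continuous))
    have hS2ne : S2.Nonempty := ⟨0, le_refl _, hT0.le, le_of_eq h0⟩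
    have hS2bdd : BddAbove S2 := ⟨T, fun x hx => hx.2.1⟩
    set s := sSup S2 with hsdef
    have hsS : s ∈ S2 := hS2closed.csSup_mem hS2ne hS2bdd
    have hsT : s < T := lt_of_le_of_ne hsS.2.1 (fun heq => by rw [heq] at hsS; linarith [hsS.2.2])
    have hupos2 : ∀ x, s < x → x ≤ T → 0 < u x := by
      intro x hx1 hx2
      by_contra hc
      push_neg at hc
      exact absurd (le_csSup hS2bdd ⟨le_trans hsS.1 hx1.le, hx2, hc⟩) (not_le.mpr hx1)
    have hmonu' : MonotoneOn (deriv u) (Icc s T) := by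
      apply monotoneOn_of_deriv_nonneg (convex_Icc _ _) hud'.continuous.continuousOn
        (hud'.differentiableOn.mono interior_subset)
      intro x hx
      rw [interior_Icc] at hx
      have hx0 : 0 < x := lt_of_le_of_lt hsS.1 hx.1
      rw [hODE x hx0]
      have h1 := hv x hx0
      have h2 := (hupos2 x hx.1 hx.2.le).le
      positivity
    have hantiu : AntitoneOn u (Icc s T) := by
      apply antitoneOn_of_deriv_nonpos (convex_Icc _ _) hud.continuous.continuousOn
        (hud.differentiableOn.mono interior_subset)
      intro x hx
      rw [interior_Icc] at hx
      have := hmonu' (Ioo_subset_Icc_self hx) (right_mem_Icc.mpr (hsS.2.1)) hx.2.le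
      rw [hu'T] at this
      exact this
    have := hantiu (left_mem_Icc.mpr hsS.2.1) (right_mem_Icc.mpr hsS.2.1) hsS.2.1
    linarith [hsS.2.2]
  have huT : u T = 0 := le_antisymm huT0' huT0
  have hupos : ∀ r, T < r → 0 < u r := by
    intro r hr
    have := humono (self_mem_Ici) (le_of_lt hr : T ≤ r) hr
    rwa [huT] at this
  have hu'mono : MonotoneOn (deriv u) (Ici T) := by
    apply monotoneOn_of_deriv_nonneg (convex_Ici T) hud'.continuous.continuousOn
      (hud'.differentiableOn.mono interior_subset)
    intro x hx
    rw [interior_Ici] at hx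
    rw [hODE x (lt_trans hT0 hx)]
    have h1 := hv x (lt_trans hT0 hx)
    have h2 := (hupos x hx).le
    positivity

  -- v is integrable near T
  have hL' : (∫⁻ s in Ioc T (T+1), ENNReal.ofReal (v s)) < ⊤ := by
    have h1 : (∫⁻ s in Ioc T (T+1), ENNReal.ofReal (v s))
        ≤ ∫⁻ s in Ioc T (T+1), ENNReal.ofReal ((T^2)⁻¹) * ENNReal.ofReal (v s * s^2) := by
      apply lintegral_mono_ae
      filter_upwards [ae_restrict_mem measurableSet_Ioc] with x hx
      rw [← ENNReal.ofReal_mul (by positivity)]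
      apply ENNReal.ofReal_le_ofReal
      have hx0 : 0 < x := lt_trans hT0 hx.1
      have hvs : 0 ≤ v x := hv x hx0
      have hsq : T^2 ≤ x^2 := pow_le_pow_left₀ hT0.le hx.1.le 2
      have hT2 : (0:ℝ) < T^2 := by positivity
      calc v x = (T^2)⁻¹ * (v x * T^2) := by field_simp
        _ ≤ (T^2)⁻¹ * (v x * x^2) := by
            apply mul_le_mul_of_nonneg_left _ (by positivity)
            exact mul_le_mul_of_nonneg_left hsq hvs
    rw [lintegral_const_mul' _ _ ENNReal.ofReal_ne_top] at h1
    apply lt_of_le_of_lt h1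
    apply ENNReal.mul_lt_top ENNReal.ofReal_lt_top
    apply lt_of_le_of_lt (lintegral_mono_set (fun x hx => lt_trans hT0 hx.1))
    exact lt_top_iff_ne_top.mpr hT
  set V : ℝ → ℝ := fun s => 2 * deriv (deriv u) s / u s with hVdef
  have hVcont : ContinuousOn V (Ioi T) := by
    apply ContinuousOn.div (continuousOn_const.mul hcont2.continuousOn)
      hud.continuous.continuousOn
    intro x hx
    exact ne_of_gt (hupos x hx)
  have hveq : ∀ x ∈ Ioc T (T+1), v x = V x := by
    intro x hx
    have hx0 : 0 < x := lt_trans hT0 hx.1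
    have hu0 : u x ≠ 0 := ne_of_gt (hupos x hx.1)
    have := hODE x hx0
    rw [hVdef]
    simp only
    rw [this]
    field_simp
  have hvae : V =ᵐ[volume.restrict (Ioc T (T+1))] v := by
    filter_upwards [ae_restrict_mem measurableSet_Ioc] with x hx
    exact (hveq x hx).symm
  have hvnn : 0 ≤ᵐ[volume.restrict (Ioc T (T+1))] v := by
    filter_upwards [ae_restrict_mem measurableSet_Ioc] with x hx
    exact hv x (lt_trans hT0 hx.1)
  have hInt : IntegrableOn v (Ioc T (T+1)) := by
    constructor
    · exact ((hVcont.mono Ioc_subset_Ioi_self).aestronglyMeasurable measurableSet_Ioc).congr hvae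
    · exact (hasFiniteIntegral_iff_ofReal hvnn).mpr hL'
  have hIntIcc : IntegrableOn v (Icc T (T+1)) :=
    (integrableOn_Icc_iff_integrableOn_Ioc).mpr hInt
  -- primitive W
  set W : ℝ → ℝ := fun x => ∫ t in Ioc T x, v t with hWdef
  have hWcont : ContinuousOn W (Icc T (T+1)) :=
    intervalIntegral.continuousOn_primitive hIntIcc
  have hWT : W T = 0 := by
    rw [hWdef]; simp
  -- find r close to T
  have hev : ∀ᶠ x in 𝓝[Ioc T (T+1)] T, W x < 2 := by
    have h1 : Tendsto W (𝓝[Icc T (T+1)] T) (nhds 0) := by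
      have := (hWcont T (left_mem_Icc.mpr (by linarith))).tendsto
      rwa [hWT] at this
    have h2 : Tendsto W (𝓝[Ioc T (T+1)] T) (nhds 0) :=
      h1.mono_left (nhdsWithin_mono T Ioc_subset_Icc_self)
    exact h2.eventually (eventually_lt_nhds (by norm_num))
  have : ∃ r, r ∈ Ioc T (T+1) ∧ W r < 2 := by
    have hne : (𝓝[Ioc T (T+1)] T).NeBot := left_nhdsWithin_Ioc_neBot (by linarith)
    obtain ⟨r, hr1, hr2⟩ := (hev.and eventually_mem_nhdsWithin).exists
    exact ⟨r, hr2, hr1⟩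
  obtain ⟨r, hr, hWr⟩ := this
  have hrT : T < r := hr.1
  have hr0 : 0 < r := lt_trans hT0 hrT
  have hu'r : 0 < deriv u r := hu'pos r hrT
  have hur : 0 < u r := hupos r hrT
  -- FTC : u' r = ∫ u'' over Ioc T r
  have hFTC : deriv u r = ∫ x in Ioc T r, deriv (deriv u) x := by
    have h1 : ∫ x in T..r, deriv (deriv u) x = deriv u r - deriv u T := by
      apply intervalIntegral.integral_eq_sub_of_hasDerivAt
      · intro x _
        exact hud'.differentiableAt.hasDerivAt
      · exact hcont2.intervalIntegrable _ _
    rw [hu'T, sub_zero] at h1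
    rw [← h1, intervalIntegral.integral_of_le hrT.le]
  have hIntvr : IntegrableOn v (Ioc T r) := hInt.mono_set (Ioc_subset_Ioc_right hr.2)
  have hbound : deriv u r ≤ (u r / 2) * W r := by
    rw [hFTC]
    have h1 : ∫ x in Ioc T r, deriv (deriv u) x ≤ ∫ x in Ioc T r, (u r / 2) * v x := by
      apply setIntegral_mono_on
      · exact (hcont2.integrableOn_Ioc)
      · exact hIntvr.const_mul _
      · exact measurableSet_Ioc
      · intro x hx
        have hx0 : 0 < x := lt_trans hT0 hx.1
        rw [hODE x hx0]
        have h2 := hv x hx0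
        have h3 : u x ≤ u r := (humono.monotoneOn (mem_Ici.mpr hx.1.le) (mem_Ici.mpr hrT.le)) hx.2
        have h4 : 0 < u x := hupos x hx.1
        nlinarith
    calc ∫ x in Ioc T r, deriv (deriv u) x ≤ ∫ x in Ioc T r, (u r / 2) * v x := h1
      _ = (u r / 2) * W r := by
          rw [hWdef]
          simp only
          rw [← integral_const_mul]
  -- MVT : u r ≤ (r - T) * deriv u r
  have hMVT : u r ≤ (r - T) * deriv u r := by
    obtain ⟨c, hc, hceq⟩ := exists_deriv_eq_slope u hrT hud.continuous.continuousOn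
      hud.differentiableOn
    have h1 : u r = (r - T) * deriv u c := by
      rw [hceq]
      field_simp [huT, ne_of_gt (sub_pos.mpr hrT)]
      rw [huT, sub_zero]
    rw [h1]
    apply mul_le_mul_of_nonneg_left _ (by linarith)
    exact hu'mono (mem_Ici.mpr hc.1.le) (mem_Ici.mpr hrT.le) hc.2.le
  have hW0 : 0 ≤ W r := by
    apply setIntegral_nonneg measurableSet_Ioc
    intro x hx
    exact hv x (lt_trans hT0 hx.1)
  have hr1 : r - T ≤ 1 := by linarith [hr.2]
  nlinarith [mul_le_mul_of_nonneg_right hMVT (by linarith : (0:ℝ) ≤ W r / 2)]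


/-- Spruch–Rosenberg inequality: the scattering length of a nonnegative
spherically symmetric potential satisfies `a ≤ ½ ∫₀^∞ v(r) r² dr`. -/
theorem stmt_5 (v u : ℝ → ℝ) (a : ℝ)
    (hv : ∀ r, 0 < r → 0 ≤ v r)
    (hu : ContDiff ℝ 2 u) (h0 : u 0 = 0)
    (hODE : ∀ r, 0 < r → deriv (deriv u) r = (1 / 2) * v r * u r)
    (hnorm : Tendsto (deriv u) atTop (nhds 1))
    (hscat : Tendsto (fun r => r - u r / deriv u r) atTop (nhds a)) :
    ENNReal.ofReal a ≤ 2⁻¹ * ∫⁻ r in Set.Ioi (0 : ℝ), ENNReal.ofReal (v r * r ^ 2) := by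
  by_cases hc : ∀ r, 0 < r → 0 < deriv u r
  · exact aux_pos v u a hv hu h0 hODE hnorm hscat hc
  · push_neg at hc
    obtain ⟨r, hr1, hr2⟩ := hc
    rw [aux_deg v u hv hu h0 hODE hnorm ⟨r, hr1, hr2⟩, ENNReal.mul_top (by norm_num)]
    exact le_top
end

section
/- Truncation bound for the scattering length: if ṽ(r) = v(r)·1_{r ≤ R̃} is the truncation of v at radius R̃, with scattering length ã, then 0 ≤ a - ã ≤ ½ ∫_{R̃}^∞ v(r) r² dr. -/
open Filter MeasureTheory Set ENNReal

section Aux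

variable {v u : ℝ → ℝ}

lemma aux_diff' (hu : ContDiff ℝ 2 u) :
    Differentiable ℝ u ∧ Differentiable ℝ (deriv u) ∧ Continuous (deriv (deriv u)) := by
  have h2 : ContDiff ℝ (1 + 1 : ℕ) u := by exact_mod_cast hu
  have h1 : ContDiff ℝ (1 : ℕ) (deriv u) := h2.iterate_deriv' 1 1
  exact ⟨hu.differentiable (by norm_num), h1.differentiable (by norm_num), h1.continuous_deriv le_rfl⟩

/-- A function continuous on a convex set with zero derivative on the interior is constant. -/
lemma aux_const {f : ℝ → ℝ} {s : Set ℝ} (hs : Convex ℝ s) (hf : ContinuousOn f s)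
    (hd : DifferentiableOn ℝ f (interior s)) (h : ∀ x ∈ interior s, deriv f x = 0)
    {x y : ℝ} (hx : x ∈ s) (hy : y ∈ s) (hxy : x ≤ y) : f x = f y :=
  le_antisymm
    (monotoneOn_of_deriv_nonneg hs hf hd (fun z hz => (h z hz).ge) hx hy hxy)
    (antitoneOn_of_deriv_nonpos hs hf hd (fun z hz => (h z hz).le) hx hy hxy)

lemma aux_nonneg' (hv : ∀ r, 0 < r → 0 ≤ v r) (hu : ContDiff ℝ 2 u) (h0 : u 0 = 0)
    (hODE : ∀ r, 0 < r → deriv (deriv u) r = (1 / 2) * v r * u r)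
    (hnorm : Tendsto (deriv u) atTop (nhds 1)) :
    ∀ r, 0 ≤ r → 0 ≤ u r := by
  obtain ⟨du, du', cu''⟩ := aux_diff' hu
  intro r₁ hr₁0
  by_contra hneg
  push_neg at hneg
  have hr₁ : 0 < r₁ := by
    rcases hr₁0.lt_or_eq with h | h
    · exact h
    · exact absurd hneg (by rw [← h, h0]; exact lt_irrefl 0)
  -- find M > r₁ with 0 < u M
  obtain ⟨N₀, hN₀⟩ := eventually_atTop.mp
    (hnorm.eventually (eventually_ge_nhds (by norm_num : (1:ℝ)/2 < 1)))
  set N := max N₀ r₁ with hNdef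
  set M := N + 2 * (|u N| + 1) with hMdef
  have hNM : N < M := lt_add_of_pos_right N (by positivity)
  have hr₁M : r₁ < M := lt_of_le_of_lt (le_max_right N₀ r₁) hNM
  have huM : 0 < u M := by
    obtain ⟨c, hc, hc'⟩ := exists_deriv_eq_slope u hNM du.continuous.continuousOn
      du.differentiableOn
    have h12 : (1:ℝ)/2 ≤ deriv u c := hN₀ c (le_trans (le_max_left N₀ r₁) hc.1.le)
    have : (1:ℝ)/2 ≤ (u M - u N) / (M - N) := hc' ▸ h12
    have hMN : (0:ℝ) < M - N := by linarith
    have h2 : (M - N) * (1/2) ≤ u M - u N := by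
      rw [div_le_div_iff₀ (by norm_num) hMN] at this; linarith
    have : |u N| + 1 ≤ u M - u N := by rw [hMdef] at h2 ⊢; linarith
    have := neg_abs_le (u N)
    linarith
  -- last zero before r₁
  set K₁ := Icc (0:ℝ) r₁ ∩ u ⁻¹' {0} with hK₁def
  have hK₁c : IsClosed K₁ := isClosed_Icc.inter (isClosed_singleton.preimage du.continuous)
  have hK₁ne : K₁.Nonempty := ⟨0, ⟨le_rfl, hr₁.le⟩, h0⟩
  have hK₁bdd : BddAbove K₁ := bddAbove_Icc.mono inter_subset_left
  set α := sSup K₁ with hαdef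
  have hαK : α ∈ K₁ := hK₁c.csSup_mem hK₁ne hK₁bdd
  have hα0 : 0 ≤ α := hαK.1.1
  have hαr₁ : α < r₁ := lt_of_le_of_ne hαK.1.2 (fun h => by
    have := hαK.2; rw [h] at this; exact absurd this (ne_of_lt hneg))
  have huα : u α = 0 := hαK.2
  -- first zero after r₁
  set K₂ := Icc r₁ M ∩ u ⁻¹' {0} with hK₂def
  have hK₂c : IsClosed K₂ := isClosed_Icc.inter (isClosed_singleton.preimage du.continuous)
  have hK₂ne : K₂.Nonempty := by
    have := intermediate_value_Icc hr₁M.le du.continuous.continuousOn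
      (show (0:ℝ) ∈ Icc (u r₁) (u M) from ⟨hneg.le, huM.le⟩)
    obtain ⟨z, hz, hz0⟩ := this
    exact ⟨z, hz, hz0⟩
  have hK₂bdd : BddBelow K₂ := bddBelow_Icc.mono inter_subset_left
  set β := sInf K₂ with hβdef
  have hβK : β ∈ K₂ := hK₂c.csInf_mem hK₂ne hK₂bdd
  have huβ : u β = 0 := hβK.2
  have hr₁β : r₁ < β := lt_of_le_of_ne hβK.1.1 (fun h => by
    have := hβK.2; rw [← h] at this; exact absurd this (ne_of_lt hneg))
  have hαβ : α < β := hαr₁.trans hr₁β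
  -- u < 0 on (α, β)
  have hneg' : ∀ x ∈ Ioo α β, u x < 0 := by
    intro x hx
    rcases le_or_gt x r₁ with hle | hlt
    · have hxIcc : x ∈ Icc (0:ℝ) r₁ := ⟨hα0.trans hx.1.le, hle⟩
      have hne : u x ≠ 0 := fun h => absurd (le_csSup hK₁bdd ⟨hxIcc, h⟩) (not_le_of_gt hx.1)
      rcases lt_or_gt_of_ne hne with h | h
      · exact h
      · exfalso
        obtain ⟨z, hz, hz0⟩ := intermediate_value_Icc' hle du.continuous.continuousOn
          (show (0:ℝ) ∈ Icc (u r₁) (u x) from ⟨hneg.le, h.le⟩)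
        have hzK : z ∈ K₁ := ⟨⟨(hα0.trans hx.1.le).trans hz.1, hz.2⟩, hz0⟩
        exact absurd (le_csSup hK₁bdd hzK) (not_le_of_gt (hx.1.trans_le hz.1))
    · have hne : u x ≠ 0 := fun h => absurd (csInf_le hK₂bdd ⟨⟨hlt.le, hx.2.le.trans hβK.1.2⟩, h⟩)
        (not_le_of_gt hx.2)
      rcases lt_or_gt_of_ne hne with h | h
      · exact h
      · exfalso
        obtain ⟨z, hz, hz0⟩ := intermediate_value_Icc hlt.le du.continuous.continuousOn
          (show (0:ℝ) ∈ Icc (u r₁) (u x) from ⟨hneg.le, h.le⟩)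
        have hzK : z ∈ K₂ := ⟨⟨hz.1, (hz.2.trans hx.2.le).trans hβK.1.2⟩, hz0⟩
        exact absurd (csInf_le hK₂bdd hzK) (not_le_of_gt ((hz.2.trans_lt hx.2)))
  -- u concave on [α, β]
  have hconc : ConcaveOn ℝ (Icc α β) u := by
    apply concaveOn_of_deriv2_nonpos (convex_Icc α β) du.continuous.continuousOn
      (du.differentiableOn) (du'.differentiableOn)
    intro x hx
    rw [interior_Icc] at hx
    have hx0 : 0 < x := hα0.trans_lt hx.1
    have : deriv^[2] u x = deriv (deriv u) x := rfl
    rw [this, hODE x hx0]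
    have := hv x hx0
    have := hneg' x hx
    nlinarith
  -- contradiction
  have hr₁mem : r₁ ∈ segment ℝ α β := by
    rw [segment_eq_Icc hαβ.le]; exact ⟨hαr₁.le, hr₁β.le⟩
  have := hconc.ge_on_segment (left_mem_Icc.mpr hαβ.le) (right_mem_Icc.mpr hαβ.le) hr₁mem
  rw [huα, huβ, min_self] at this
  exact absurd this (not_le_of_gt hneg)

-- deriv u monotone on Ici 0, given u ≥ 0
lemma aux_mono' (hv : ∀ r, 0 < r → 0 ≤ v r) (hu : ContDiff ℝ 2 u)
    (hODE : ∀ r, 0 < r → deriv (deriv u) r = (1 / 2) * v r * u r)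
    (hpos : ∀ r, 0 ≤ r → 0 ≤ u r) :
    MonotoneOn (deriv u) (Ici 0) := by
  obtain ⟨du, du', cu''⟩ := aux_diff' hu
  apply monotoneOn_of_deriv_nonneg (convex_Ici 0) du'.continuous.continuousOn
    du'.differentiableOn
  intro x hx
  rw [interior_Ici] at hx
  rw [hODE x hx]
  have := hv x hx
  have := hpos x hx.le
  nlinarith

-- gradient inequalities from monotonicity of deriv
lemma aux_grad' {x y : ℝ} (hu : ContDiff ℝ 2 u) (hmono : MonotoneOn (deriv u) (Ici 0))
    (hx : 0 ≤ x) (hxy : x ≤ y) :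
    deriv u x * (y - x) ≤ u y - u x ∧ u y - u x ≤ deriv u y * (y - x) := by
  obtain ⟨du, du', cu''⟩ := aux_diff' hu
  rcases eq_or_lt_of_le hxy with rfl | hlt
  · simp
  · obtain ⟨c, hc, hc'⟩ := exists_deriv_eq_slope u hlt du.continuous.continuousOn
      du.differentiableOn
    have h1 : deriv u x ≤ deriv u c := hmono (mem_Ici.mpr hx) (mem_Ici.mpr (hx.trans hc.1.le)) hc.1.le
    have h2 : deriv u c ≤ deriv u y := hmono (mem_Ici.mpr (hx.trans hc.1.le))
      (mem_Ici.mpr (hx.trans hxy)) hc.2.le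
    have hyx : (0:ℝ) < y - x := by linarith
    have heq : u y - u x = deriv u c * (y - x) := by
      field_simp at hc'; linarith [hc']
    constructor <;> nlinarith

-- deriv u nonneg on Ioi 0
lemma aux_deriv_nonneg' (hu : ContDiff ℝ 2 u) (h0 : u 0 = 0)
    (hmono : MonotoneOn (deriv u) (Ici 0)) (hpos : ∀ r, 0 ≤ r → 0 ≤ u r) :
    ∀ x, 0 < x → 0 ≤ deriv u x := by
  intro x hx
  have := (aux_grad' hu hmono le_rfl hx.le).2
  rw [h0, sub_zero, sub_zero] at this
  have hux := hpos x hx.le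
  nlinarith


end Aux

set_option maxHeartbeats 2000000 in
/-- Truncation bound for the scattering length: if `ṽ = v·1_{r ≤ Rt}` has
scattering length `at'`, then `0 ≤ a - at' ≤ ½ ∫_{Rt}^∞ v(r) r² dr`. -/
theorem stmt_6 (v u : ℝ → ℝ) (a : ℝ) (Rt : ℝ) (hR : 0 < Rt)
    (hv : ∀ r, 0 < r → 0 ≤ v r)
    (hu : ContDiff ℝ 2 u) (h0 : u 0 = 0)
    (hODE : ∀ r, 0 < r → deriv (deriv u) r = (1 / 2) * v r * u r)
    (hnorm : Tendsto (deriv u) atTop (nhds 1))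
    (hscat : Tendsto (fun r => r - u r / deriv u r) atTop (nhds a))
    (ut : ℝ → ℝ) (at' : ℝ)
    (hut : ContDiff ℝ 2 ut) (h0' : ut 0 = 0)
    (hODE' : ∀ r, 0 < r →
      deriv (deriv ut) r = (1 / 2) * (if r ≤ Rt then v r else 0) * ut r)
    (hnorm' : Tendsto (deriv ut) atTop (nhds 1))
    (hscat' : Tendsto (fun r => r - ut r / deriv ut r) atTop (nhds at')) :
    0 ≤ a - at' ∧
      ENNReal.ofReal (a - at')
        ≤ 2⁻¹ * ∫⁻ r in Set.Ioi Rt, ENNReal.ofReal (v r * r ^ 2) := by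
  obtain ⟨du, du', cu''⟩ := aux_diff' hu
  obtain ⟨dt, dt', ct''⟩ := aux_diff' hut
  have hvt_nonneg : ∀ r, 0 < r → 0 ≤ (fun r => if r ≤ Rt then v r else 0) r := by
    intro r hr; by_cases h : r ≤ Rt <;> simp [h, hv r hr]
  have hut_nonneg : ∀ r, 0 ≤ r → 0 ≤ ut r := aux_nonneg' hvt_nonneg hut h0' hODE' hnorm'
  have hu_nonneg : ∀ r, 0 ≤ r → 0 ≤ u r := aux_nonneg' hv hu h0 hODE hnorm
  have hmu : MonotoneOn (deriv u) (Ici 0) := aux_mono' hv hu hODE hu_nonneg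
  have hmt : MonotoneOn (deriv ut) (Ici 0) := aux_mono' hvt_nonneg hut hODE' hut_nonneg
  -- deriv ut is constant ( = 1 ) on Ici Rt
  have hdt0 : ∀ x ∈ interior (Ici Rt), deriv (deriv ut) x = 0 := by
    intro x hx; rw [interior_Ici] at hx
    rw [hODE' x (hR.trans hx), if_neg (not_le_of_gt hx)]; ring
  have hdtconst : ∀ x ∈ Ici Rt, deriv ut x = deriv ut Rt := fun x hx =>
    (aux_const (convex_Ici Rt) dt'.continuous.continuousOn dt'.differentiableOn hdt0
      self_mem_Ici hx hx).symm
  have hdt1 : ∀ x ∈ Ici Rt, deriv ut x = 1 := by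
    have h1 : Tendsto (fun _ : ℝ => deriv ut Rt) atTop (nhds (deriv ut Rt)) := tendsto_const_nhds
    have h2 : deriv ut Rt = 1 := by
      refine tendsto_nhds_unique (h1.congr' ?_) hnorm'
      filter_upwards [eventually_ge_atTop Rt] with x hx
      exact (hdtconst x hx).symm
    intro x hx; rw [hdtconst x hx, h2]
  -- ut is linear on Ici Rt
  have hutlin : ∀ x ∈ Ici Rt, ut x = ut Rt + (x - Rt) := by
    intro x hx
    have hd : ∀ y ∈ interior (Ici Rt), deriv (fun r => ut r - r) y = 0 := by
      intro y hy
      rw [(show HasDerivAt (fun r => ut r - r) (deriv ut y - 1) y from dt.differentiableAt.hasDerivAt.sub (hasDerivAt_id' y)).deriv]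
      rw [hdt1 y (interior_subset hy)]; ring
    have := aux_const (convex_Ici Rt) ((dt.continuous.sub continuous_id).continuousOn)
      ((dt.sub differentiable_id).differentiableOn) hd self_mem_Ici hx hx
    simp only [Pi.sub_apply, id] at this
    linarith [this]
  -- value of at'
  have hat' : at' = Rt - ut Rt := by
    refine tendsto_nhds_unique hscat' (tendsto_const_nhds.congr' ?_)
    filter_upwards [eventually_ge_atTop Rt] with x hx
    rw [hdt1 x hx, hutlin x hx]; ring
  -- Wronskian: u Rt = u' Rt * ut Rt
  have hW : u Rt = deriv u Rt * ut Rt := by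
    set W : ℝ → ℝ := fun r => u r * deriv ut r - deriv u r * ut r with hWdef
    have hWd : ∀ x, HasDerivAt W
        (deriv u x * deriv ut x + u x * deriv (deriv ut) x
          - (deriv (deriv u) x * ut x + deriv u x * deriv ut x)) x := by
      intro x
      exact (du.differentiableAt.hasDerivAt.mul dt'.differentiableAt.hasDerivAt).sub
        (du'.differentiableAt.hasDerivAt.mul dt.differentiableAt.hasDerivAt)
    have hWzero : ∀ x ∈ interior (Icc 0 Rt), deriv W x = 0 := by
      intro x hx
      rw [interior_Icc] at hx
      rw [(hWd x).deriv, hODE x hx.1, hODE' x hx.1, if_pos hx.2.le]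
      ring
    have hcont : ContinuousOn W (Icc 0 Rt) :=
      ((du.continuous.mul dt'.continuous).sub (du'.continuous.mul dt.continuous)).continuousOn
    have hdiff : DifferentiableOn ℝ W (interior (Icc 0 Rt)) :=
      fun x _ => (hWd x).differentiableAt.differentiableWithinAt
    have := aux_const (convex_Icc 0 Rt) hcont hdiff hWzero
      (left_mem_Icc.mpr hR.le) (right_mem_Icc.mpr hR.le) hR.le
    have hW0 : W 0 = 0 := by simp [hWdef, h0, h0']
    have hWRt : W Rt = u Rt * 1 - deriv u Rt * ut Rt := by
      rw [hWdef]; simp only; rw [hdt1 Rt self_mem_Ici]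
    rw [hW0, hWRt] at this
    linarith
  have h2inv : ENNReal.ofReal (2:ℝ)⁻¹ = (2:ℝ≥0∞)⁻¹ := by
    rw [ENNReal.ofReal_inv_of_pos two_pos, ENNReal.ofReal_ofNat]
  rcases lt_or_ge 0 (deriv u Rt) with hpos | hzero
  · -- Case 1 : u'(Rt) > 0
    have hu'pos : ∀ x, Rt ≤ x → 0 < deriv u x := fun x hx =>
      lt_of_lt_of_le hpos (hmu (mem_Ici.mpr hR.le) (mem_Ici.mpr (hR.le.trans hx)) hx)
    have huRt : 0 < u Rt := by
      rcases (hu_nonneg Rt hR.le).lt_or_eq with h | h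
      · exact h
      · exfalso
        have hmin : IsLocalMin u Rt := by
          filter_upwards [Ioi_mem_nhds hR] with x hx
          rw [← h]; exact hu_nonneg x hx.le
        exact hpos.ne' hmin.deriv_eq_zero
    set H : ℝ → ℝ := fun r => r - u r / deriv u r with hHdef
    have hH' : ∀ x, Rt ≤ x → HasDerivAt H (u x * deriv (deriv u) x / (deriv u x)^2) x := by
      intro x hx
      have hne : deriv u x ≠ 0 := (hu'pos x hx).ne'
      have h1 : HasDerivAt (fun r => u r / deriv u r)
          ((deriv u x * deriv u x - u x * deriv (deriv u) x) / (deriv u x)^2) x :=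
        (du.differentiableAt.hasDerivAt).div (du'.differentiableAt.hasDerivAt) hne
      have h2 := (hasDerivAt_id' x).sub h1
      refine h2.congr_deriv ?_
      have key : deriv u x * deriv u x / (deriv u x)^2 = 1 := by
        rw [← sq]; exact div_self (pow_ne_zero 2 hne)
      linear_combination -key
    have hH'nonneg : ∀ x, Rt ≤ x → 0 ≤ u x * deriv (deriv u) x / (deriv u x)^2 := by
      intro x hx
      have hx0 : 0 < x := hR.trans_le hx
      have := hv x hx0
      have := hu_nonneg x hx0.le
      rw [hODE x hx0]
      positivity
    have hmonoH : MonotoneOn H (Ici Rt) := by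
      refine monotoneOn_of_deriv_nonneg (convex_Ici Rt)
        (fun x hx => ((hH' x hx).continuousAt.continuousWithinAt)) ?_ ?_
      · intro x hx
        rw [interior_Ici] at hx
        exact (hH' x hx.le).differentiableAt.differentiableWithinAt
      · intro x hx
        rw [interior_Ici] at hx
        rw [(hH' x hx.le).deriv]
        exact hH'nonneg x hx.le
    have hage : H Rt ≤ a := by
      apply ge_of_tendsto hscat
      filter_upwards [eventually_ge_atTop Rt] with x hx
      exact hmonoH self_mem_Ici hx hx
    have hHRt : H Rt = at' := by
      rw [hHdef]; simp only
      rw [hW, hat', mul_div_cancel_left₀ _ hpos.ne']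
    have key : ∀ R, Rt ≤ R → ENNReal.ofReal (H R - H Rt)
        ≤ 2⁻¹ * ∫⁻ r in Ioi Rt, ENNReal.ofReal (v r * r^2) := by
      intro R hR'
      have contF' : ContinuousOn (fun x => u x * deriv (deriv u) x / (deriv u x)^2) (Icc Rt R) :=
        ((du.continuous.mul cu'').continuousOn).div
          ((du'.continuous.pow 2).continuousOn)
          (fun x hx => pow_ne_zero 2 (hu'pos x hx.1).ne')
      have hFTC : ∫ x in Rt..R, u x * deriv (deriv u) x / (deriv u x)^2 = H R - H Rt := by
        apply intervalIntegral.integral_eq_sub_of_hasDerivAt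
        · intro x hx
          rw [uIcc_of_le hR'] at hx
          exact hH' x hx.1
        · apply ContinuousOn.intervalIntegrable
          rwa [uIcc_of_le hR']
      calc ENNReal.ofReal (H R - H Rt)
          = ENNReal.ofReal (∫ x in Ioc Rt R, u x * deriv (deriv u) x / (deriv u x)^2) := by
            rw [← hFTC, intervalIntegral.integral_of_le hR']
        _ = ∫⁻ x in Ioc Rt R, ENNReal.ofReal (u x * deriv (deriv u) x / (deriv u x)^2) := by
            apply ofReal_integral_eq_lintegral_ofReal
            · exact (contF'.integrableOn_Icc).mono_set Ioc_subset_Icc_self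
            · exact (ae_restrict_iff' measurableSet_Ioc).2
                (ae_of_all _ fun x hx => hH'nonneg x hx.1.le)
        _ ≤ ∫⁻ x in Ioc Rt R, ENNReal.ofReal (2⁻¹ * (v x * x^2)) := by
            apply setLIntegral_mono' measurableSet_Ioc
            intro x hx
            apply ENNReal.ofReal_le_ofReal
            have hx0 : 0 < x := hR.trans hx.1
            have hle : u x ≤ x * deriv u x := by
              have := (aux_grad' hu hmu (le_refl (0:ℝ)) hx0.le).2
              rw [h0] at this; linarith
            have hu'x := hu'pos x hx.1.le
            have hux := hu_nonneg x hx0.le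
            have hvx := hv x hx0
            rw [hODE x hx0, div_le_iff₀ (by positivity)]
            have hsq : u x * u x ≤ (x * deriv u x) * (x * deriv u x) :=
              mul_le_mul hle hle hux (by positivity)
            nlinarith [mul_le_mul_of_nonneg_left hsq hvx]
        _ = 2⁻¹ * ∫⁻ x in Ioc Rt R, ENNReal.ofReal (v x * x^2) := by
            rw [← lintegral_const_mul' _ _ (by norm_num : (2:ℝ≥0∞)⁻¹ ≠ ⊤)]
            apply lintegral_congr
            intro x
            rw [ENNReal.ofReal_mul (by norm_num : (0:ℝ) ≤ 2⁻¹), h2inv]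
        _ ≤ 2⁻¹ * ∫⁻ x in Ioi Rt, ENNReal.ofReal (v x * x^2) :=
            mul_le_mul_right (lintegral_mono_set Ioc_subset_Ioi_self) _
    have hlim : Tendsto (fun R => ENNReal.ofReal (H R - H Rt)) atTop
        (nhds (ENNReal.ofReal (a - H Rt))) :=
      (ENNReal.continuous_ofReal.tendsto _).comp (hscat.sub_const _)
    have hfin := le_of_tendsto hlim (eventually_atTop.mpr ⟨Rt, key⟩)
    rw [hHRt] at hfin hage
    exact ⟨by linarith, hfin⟩
  · -- Case 2 : deriv u Rt = 0
    have hu'Rt : deriv u Rt = 0 :=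
      le_antisymm hzero (aux_deriv_nonneg' hu h0 hmu hu_nonneg Rt hR)
    have huRt : u Rt = 0 := by
      have hz : ∀ x ∈ interior (Icc 0 Rt), deriv u x = 0 := by
        intro x hx; rw [interior_Icc] at hx
        refine le_antisymm ?_ (aux_deriv_nonneg' hu h0 hmu hu_nonneg x hx.1)
        have := hmu (mem_Ici.mpr hx.1.le) (mem_Ici.mpr hR.le) hx.2.le
        rwa [hu'Rt] at this
      have := aux_const (convex_Icc 0 Rt) du.continuous.continuousOn
        du.differentiableOn hz (left_mem_Icc.mpr hR.le) (right_mem_Icc.mpr hR.le) hR.le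
      rw [← this]; exact h0
    have hutRt : 0 ≤ ut Rt := hut_nonneg Rt hR.le
    have haRt : Rt ≤ a := by
      apply ge_of_tendsto hscat
      obtain ⟨N₀, hN₀⟩ := eventually_atTop.mp
        (hnorm.eventually (eventually_ge_nhds (by norm_num : (1:ℝ)/2 < 1)))
      filter_upwards [eventually_ge_atTop (max N₀ Rt)] with x hx
      have hxRt : Rt ≤ x := le_trans (le_max_right _ _) hx
      have hx12 : (1:ℝ)/2 ≤ deriv u x := hN₀ x (le_trans (le_max_left _ _) hx)
      have hu'x : 0 < deriv u x := lt_of_lt_of_le (by norm_num) hx12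
      have hgrad := (aux_grad' hu hmu hR.le hxRt).2
      rw [huRt, sub_zero] at hgrad
      have hdiv : u x / deriv u x ≤ x - Rt := by
        rw [div_le_iff₀ hu'x]; nlinarith
      show Rt ≤ x - u x / deriv u x
      linarith
    have hle' : at' ≤ Rt := by rw [hat']; linarith
    refine ⟨by linarith, ?_⟩
    set L := ∫⁻ r in Ioi Rt, ENNReal.ofReal (v r * r^2) with hLdef
    by_cases hL : L = ⊤
    · show ENNReal.ofReal (a - at') ≤ 2⁻¹ * L
      rw [hL, ENNReal.mul_top (by norm_num : (2:ℝ≥0∞)⁻¹ ≠ 0)]; exact le_top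
    · exfalso
      -- u is eventually positive
      obtain ⟨N₀, hN₀⟩ := eventually_atTop.mp
        (hnorm.eventually (eventually_ge_nhds (by norm_num : (1:ℝ)/2 < 1)))
      set N := max N₀ 0 with hNdef
      set M := N + 2 * (|u N| + 1) with hMdef
      have hN0 : (0:ℝ) ≤ N := le_max_right _ _
      have hNM : N ≤ M := by nlinarith [abs_nonneg (u N)]
      have hMpos : ∀ x, M ≤ x → 0 < u x := by
        intro x hx
        have hNx : N ≤ x := le_trans (by nlinarith [abs_nonneg (u N)]) hx
        have hgrad := (aux_grad' hu hmu hN0 hNx).1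
        have h12 : (1:ℝ)/2 ≤ deriv u N := hN₀ N (le_max_left _ _)
        have habs := neg_abs_le (u N)
        nlinarith [abs_nonneg (u N)]
      -- the last zero of u
      set Z := Ici (0:ℝ) ∩ u ⁻¹' {0} with hZdef
      have hZc : IsClosed Z := isClosed_Ici.inter (isClosed_singleton.preimage du.continuous)
      have hZne : Z.Nonempty := ⟨Rt, hR.le, huRt⟩
      have hZbdd : BddAbove Z := ⟨M, fun z hz => by
        by_contra hc; push_neg at hc
        exact absurd hz.2 (ne_of_gt (hMpos z hc.le))⟩
      set s := sSup Z with hsdef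
      have hsZ : s ∈ Z := hZc.csSup_mem hZne hZbdd
      have hus : u s = 0 := hsZ.2
      have hsRt : Rt ≤ s := le_csSup hZbdd ⟨hR.le, huRt⟩
      have hspos : 0 < s := hR.trans_le hsRt
      have hupos : ∀ x, s < x → 0 < u x := by
        intro x hx
        rcases (hu_nonneg x (hspos.le.trans hx.le)).lt_or_eq with h | h
        · exact h
        · exact absurd (le_csSup hZbdd ⟨(hspos.trans hx).le, h.symm⟩) (not_le_of_gt hx)
      have hu's : deriv u s = 0 := by
        have hmin : IsLocalMin u s := by
          filter_upwards [Ioi_mem_nhds hspos] with x hx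
          rw [hus]; exact hu_nonneg x hx.le
        exact hmin.deriv_eq_zero
      have hu'pos : ∀ x, s < x → 0 < deriv u x := by
        intro x hx
        rcases (aux_deriv_nonneg' hu h0 hmu hu_nonneg x (hspos.trans hx)).lt_or_eq with h | h
        · exact h
        · exfalso
          have hz : ∀ y ∈ interior (Icc s x), deriv u y = 0 := by
            intro y hy; rw [interior_Icc] at hy
            refine le_antisymm ?_
              (aux_deriv_nonneg' hu h0 hmu hu_nonneg y (hspos.trans hy.1))
            have := hmu (mem_Ici.mpr (hspos.trans hy.1).le)
              (mem_Ici.mpr (hspos.trans hx).le) hy.2.le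
            rwa [← h] at this
          have hmid : u s = u ((s+x)/2) :=
            aux_const (convex_Icc s x) du.continuous.continuousOn du.differentiableOn hz
              (left_mem_Icc.mpr hx.le) ⟨by linarith, by linarith⟩ (by linarith)
          have := hupos ((s+x)/2) (by linarith)
          rw [← hmid, hus] at this; exact lt_irrefl 0 this
      set G := fun r => Real.log (deriv u r) with hGdef
      have hGd : ∀ x, s < x → HasDerivAt G ((deriv u x)⁻¹ * deriv (deriv u) x) x := by
        intro x hx
        exact (Real.hasDerivAt_log (hu'pos x hx).ne').comp x du'.differentiableAt.hasDerivAt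
      have hbound : ∀ r₀, s < r₀ → r₀ < s + 1 →
          G (s+1) - G r₀ ≤ (s^2)⁻¹ * (L.toReal / 2) := by
        intro r₀ h1 h2
        have hr₀le : r₀ ≤ s + 1 := h2.le
        have hsub : ∀ x ∈ Icc r₀ (s+1), s < x := fun x hx => h1.trans_le hx.1
        have hcont1 : ContinuousOn (fun x => (deriv u x)⁻¹ * deriv (deriv u) x)
            (Icc r₀ (s+1)) :=
          (du'.continuous.continuousOn.inv₀
            (fun x hx => (hu'pos x (hsub x hx)).ne')).mul cu''.continuousOn
        have hcont2 : ContinuousOn (fun x => deriv (deriv u) x / u x * x^2) (Icc r₀ (s+1)) :=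
          (cu''.continuousOn.div du.continuous.continuousOn
            (fun x hx => (hupos x (hsub x hx)).ne')).mul (continuous_pow 2).continuousOn
        have hFTC : ∫ x in r₀..(s+1), (deriv u x)⁻¹ * deriv (deriv u) x = G (s+1) - G r₀ := by
          apply intervalIntegral.integral_eq_sub_of_hasDerivAt
          · intro x hx; rw [uIcc_of_le hr₀le] at hx; exact hGd x (hsub x hx)
          · apply ContinuousOn.intervalIntegrable; rwa [uIcc_of_le hr₀le]
        have hpt : ∀ x ∈ Icc r₀ (s+1), (deriv u x)⁻¹ * deriv (deriv u) x
            ≤ (s^2)⁻¹ * (deriv (deriv u) x / u x * x^2) := by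
          intro x hx
          have hsx : s < x := hsub x hx
          have hx0 : 0 < x := hspos.trans hsx
          have hux : 0 < u x := hupos x hsx
          have hu'x : 0 < deriv u x := hu'pos x hsx
          have hvx := hv x hx0
          have hle : u x ≤ deriv u x := by
            have hg := (aux_grad' hu hmu hspos.le hsx.le).2
            rw [hus, sub_zero] at hg
            nlinarith [hx.2]
          have hs2x2 : s^2 ≤ x^2 := by nlinarith
          have hd2 : deriv (deriv u) x = 1/2 * v x * u x := hODE x hx0
          rw [hd2, show 1/2 * v x * u x / u x * x^2 = 1/2 * v x * x^2 by
            field_simp]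
          calc (deriv u x)⁻¹ * (1/2 * v x * u x)
              ≤ (deriv u x)⁻¹ * (1/2 * v x * deriv u x) := by
                apply mul_le_mul_of_nonneg_left ?_ (by positivity)
                nlinarith
            _ = 1/2 * v x := by field_simp
            _ ≤ (s^2)⁻¹ * (1/2 * v x * x^2) := by
                rw [le_inv_mul_iff₀ (by positivity : (0:ℝ) < s^2)]
                nlinarith
        have hIle : G (s+1) - G r₀
            ≤ (s^2)⁻¹ * ∫ x in r₀..(s+1), deriv (deriv u) x / u x * x^2 := by
          rw [← hFTC, ← intervalIntegral.integral_const_mul]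
          apply intervalIntegral.integral_mono_on hr₀le
          · apply ContinuousOn.intervalIntegrable; rwa [uIcc_of_le hr₀le]
          · apply ContinuousOn.intervalIntegrable; rw [uIcc_of_le hr₀le]
            exact continuousOn_const.mul hcont2
          · exact hpt
        have hQ : ∫ x in r₀..(s+1), deriv (deriv u) x / u x * x^2 ≤ L.toReal / 2 := by
          have hint2 : IntegrableOn (fun x => deriv (deriv u) x / u x * x^2)
              (Ioc r₀ (s+1)) :=
            (hcont2.integrableOn_Icc).mono_set Ioc_subset_Icc_self
          have hnn : ∀ x ∈ Ioc r₀ (s+1), 0 ≤ deriv (deriv u) x / u x * x^2 := by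
            intro x hx
            have hsx : s < x := h1.trans hx.1
            have hx0 : 0 < x := hspos.trans hsx
            have := hv x hx0; have := hu_nonneg x hx0.le
            rw [hODE x hx0]; positivity
          have heq : ∫⁻ x in Ioc r₀ (s+1),
                ENNReal.ofReal (2 * (deriv (deriv u) x / u x * x^2))
              = ∫⁻ x in Ioc r₀ (s+1), ENNReal.ofReal (v x * x^2) := by
            apply setLIntegral_congr_fun measurableSet_Ioc
            intro x hx
            beta_reduce
            congr 1
            have hsx : s < x := h1.trans hx.1
            have hx0 : 0 < x := hspos.trans hsx
            rw [hODE x hx0]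
            field_simp [(hupos x hsx).ne']
          have hle2 : ∫⁻ x in Ioc r₀ (s+1), ENNReal.ofReal (v x * x^2) ≤ L := by
            rw [hLdef]
            apply lintegral_mono_set
            intro x hx
            exact lt_of_le_of_lt hsRt (h1.trans hx.1)
          have hofReal : ENNReal.ofReal
                (∫ x in Ioc r₀ (s+1), 2 * (deriv (deriv u) x / u x * x^2))
              = ∫⁻ x in Ioc r₀ (s+1),
                  ENNReal.ofReal (2 * (deriv (deriv u) x / u x * x^2)) :=
            ofReal_integral_eq_lintegral_ofReal (hint2.const_mul 2)
              ((ae_restrict_iff' measurableSet_Ioc).2 (ae_of_all _ fun x hx => by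
                simp only [Pi.zero_apply]
                have := hnn x hx; linarith))
          have hcomb : ENNReal.ofReal
              (∫ x in Ioc r₀ (s+1), 2 * (deriv (deriv u) x / u x * x^2)) ≤ L := by
            rw [hofReal, heq]; exact hle2
          have h2' : ∫ x in Ioc r₀ (s+1), 2 * (deriv (deriv u) x / u x * x^2)
              ≤ L.toReal := by
            rw [← ENNReal.ofReal_toReal hL] at hcomb
            exact (ENNReal.ofReal_le_ofReal_iff ENNReal.toReal_nonneg).mp hcomb
          rw [MeasureTheory.integral_const_mul] at h2'
          rw [intervalIntegral.integral_of_le hr₀le]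
          linarith
        calc G (s+1) - G r₀
            ≤ (s^2)⁻¹ * ∫ x in r₀..(s+1), deriv (deriv u) x / u x * x^2 := hIle
          _ ≤ (s^2)⁻¹ * (L.toReal / 2) := mul_le_mul_of_nonneg_left hQ (by positivity)
      have htends : Tendsto G (nhdsWithin s (Ioi s)) atBot := by
        apply Real.tendsto_log_nhdsGT_zero.comp
        rw [tendsto_nhdsWithin_iff]
        constructor
        · have hcd : Tendsto (deriv u) (nhds s) (nhds 0) := by
            rw [← hu's]; exact du'.continuous.tendsto s
          exact hcd.mono_left nhdsWithin_le_nhds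
        · filter_upwards [self_mem_nhdsWithin] with x hx
          exact hu'pos x hx
      have hev := (htends.eventually
          (eventually_lt_atBot (G (s+1) - (s^2)⁻¹ * (L.toReal / 2)))).and
        (Ioo_mem_nhdsGT_of_mem ⟨le_rfl, lt_add_one s⟩)
      obtain ⟨r₀, hlt, hr₀⟩ := hev.exists
      have := hbound r₀ hr₀.1 hr₀.2
      linarith
end

section
/- Lower bound on the scattering length difference under truncation: a - ã ≥ ½ ∫_{max(R̃,a)}^∞ v(r)(r-a)² dr, where ã is the scattering length of the potential truncated at radius R̃. In particular, finiteness of a requires ∫^∞ v(r) r² dr < ∞ at infinity. -/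
open Filter MeasureTheory

private lemma neg_of_no_zero {w : ℝ → ℝ} (hw : Continuous w) {p x : ℝ}
    (hp : w p < 0) (hnz : ∀ y ∈ Set.uIcc x p, w y ≠ 0) : w x < 0 := by
  by_contra hx
  push_neg at hx
  have h0 : (0:ℝ) ∈ Set.uIcc (w x) (w p) := by
    rw [Set.mem_uIcc]; right; exact ⟨hp.le, hx⟩
  obtain ⟨y, hy, hy0⟩ := intermediate_value_uIcc hw.continuousOn h0
  exact hnz y hy hy0

private lemma cd2 {w : ℝ → ℝ} (hw : ContDiff ℝ 2 w) :
    Differentiable ℝ w ∧ Differentiable ℝ (deriv w) ∧ Continuous (deriv (deriv w)) := by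
  have h : ContDiff ℝ ((1:ℕ)+1) w := by exact_mod_cast hw
  rw [contDiff_succ_iff_deriv] at h
  obtain ⟨h1, -, h2⟩ := h
  have h2' : ContDiff ℝ ((0:ℕ)+1) (deriv w) := by exact_mod_cast h2
  rw [contDiff_succ_iff_deriv] at h2'
  exact ⟨h1, h2'.1, h2'.2.2.continuous⟩

/-- A zero-energy solution with `w 0 = 0`, `w'' = h w` with `h ≥ 0`, and `w' → 1`
at infinity, is nonnegative on `[0, ∞)`. -/
private lemma sol_nonneg {w h : ℝ → ℝ} (hw : ContDiff ℝ 2 w) (h0 : w 0 = 0)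
    (hh : ∀ r, 0 < r → 0 ≤ h r)
    (hODE : ∀ r, 0 < r → deriv (deriv w) r = h r * w r)
    (hnorm : Tendsto (deriv w) atTop (nhds 1)) :
    ∀ r, 0 ≤ r → 0 ≤ w r := by
  obtain ⟨dw, dw', cw''⟩ := cd2 hw
  have cw : Continuous w := dw.continuous
  by_contra hcon
  push_neg at hcon
  obtain ⟨r0, hr0, hneg⟩ := hcon
  have hr0pos : 0 < r0 := by
    rcases hr0.eq_or_lt with h | h
    · exfalso; rw [← h, h0] at hneg; exact lt_irrefl 0 hneg
    · exact h
  -- helper: the derivative is antitone on intervals where w is negative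
  have key : ∀ p q : ℝ, 0 ≤ p → (∀ x ∈ Set.Ioo p q, w x < 0) →
      AntitoneOn (deriv w) (Set.Icc p q) := by
    intro p q hp hn
    apply antitoneOn_of_deriv_nonpos (convex_Icc p q) dw'.continuous.continuousOn
      (dw'.differentiableOn)
    intro x hx
    rw [interior_Icc] at hx
    rw [hODE x (lt_of_le_of_lt hp hx.1)]
    exact mul_nonpos_of_nonneg_of_nonpos (hh x (lt_of_le_of_lt hp hx.1)) (hn x hx).le
  have key2 : ∀ p : ℝ, 0 ≤ p → (∀ x ∈ Set.Ioi p, w x < 0) →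
      AntitoneOn (deriv w) (Set.Ici p) := by
    intro p hp hn
    apply antitoneOn_of_deriv_nonpos (convex_Ici p) dw'.continuous.continuousOn
      (dw'.differentiableOn)
    intro x hx
    rw [interior_Ici] at hx
    rw [hODE x (lt_of_le_of_lt hp hx)]
    exact mul_nonpos_of_nonneg_of_nonpos (hh x (lt_of_le_of_lt hp hx)) (hn x hx).le
  -- Step 1: deriv w r0 < 0
  set Z : Set ℝ := Set.Icc 0 r0 ∩ w ⁻¹' {0} with hZdef
  have hZc : IsClosed Z := isClosed_Icc.inter (isClosed_singleton.preimage cw)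
  have hZne : Z.Nonempty := ⟨0, ⟨le_refl 0, hr0pos.le⟩, h0⟩
  have hZbdd : BddAbove Z := ⟨r0, fun x hx => hx.1.2⟩
  set r1 : ℝ := sSup Z with hr1def
  have hr1mem : r1 ∈ Z := hZc.csSup_mem hZne hZbdd
  have hr1z : w r1 = 0 := hr1mem.2
  have h0r1 : 0 ≤ r1 := hr1mem.1.1
  have hr1r0 : r1 < r0 := by
    rcases hr1mem.1.2.eq_or_lt with h | h
    · exfalso; rw [h] at hr1z; rw [hr1z] at hneg; exact lt_irrefl 0 hneg
    · exact h
  have hnoz : ∀ y ∈ Set.Ioc r1 r0, w y ≠ 0 := by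
    intro y hy hzero
    exact absurd (le_csSup hZbdd ⟨⟨h0r1.trans hy.1.le, hy.2⟩, hzero⟩) (not_le.mpr hy.1)
  have hnegI : ∀ x ∈ Set.Ioc r1 r0, w x < 0 := by
    intro x hx
    apply neg_of_no_zero cw hneg
    intro y hy
    rw [Set.uIcc_of_le hx.2] at hy
    exact hnoz y ⟨lt_of_lt_of_le hx.1 hy.1, hy.2⟩
  have hant1 : AntitoneOn (deriv w) (Set.Icc r1 r0) :=
    key r1 r0 h0r1 (fun x hx => hnegI x ⟨hx.1, hx.2.le⟩)
  obtain ⟨c, hc, hceq⟩ := exists_hasDerivAt_eq_slope w (deriv w) hr1r0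
    cw.continuousOn (fun x _ => (dw x).hasDerivAt)
  have hcneg : deriv w c < 0 := by
    rw [hceq, hr1z, sub_zero]
    exact div_neg_of_neg_of_pos hneg (by linarith [hc.1, hc.2])
  have hdr0 : deriv w r0 < 0 :=
    lt_of_le_of_lt (hant1 ⟨hc.1.le, hc.2.le⟩ ⟨hr1r0.le, le_refl r0⟩ hc.2.le) hcneg
  -- Step 2: w < 0 on [r0, ∞)
  have hnz2 : ∀ y ∈ Set.Ici r0, w y ≠ 0 := by
    intro y hy hzero
    have hyr0 : r0 < y := by
      rcases (Set.mem_Ici.mp hy).eq_or_lt with h | h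
      · exfalso; rw [← h] at hzero; rw [hzero] at hneg; exact lt_irrefl 0 hneg
      · exact h
    set Z2 : Set ℝ := Set.Icc r0 y ∩ w ⁻¹' {0} with hZ2def
    have hZ2c : IsClosed Z2 := isClosed_Icc.inter (isClosed_singleton.preimage cw)
    have hZ2ne : Z2.Nonempty := ⟨y, ⟨hyr0.le, le_refl y⟩, hzero⟩
    have hZ2bdd : BddBelow Z2 := ⟨r0, fun x hx => hx.1.1⟩
    set r2 : ℝ := sInf Z2 with hr2def
    have hr2mem : r2 ∈ Z2 := hZ2c.csInf_mem hZ2ne hZ2bdd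
    have hr2z : w r2 = 0 := hr2mem.2
    have hr0r2 : r0 < r2 := by
      rcases hr2mem.1.1.eq_or_lt with h | h
      · exfalso; rw [← h] at hr2z; rw [hr2z] at hneg; exact lt_irrefl 0 hneg
      · exact h
    have hnoz2 : ∀ z ∈ Set.Ico r0 r2, w z ≠ 0 := by
      intro z hz hzz
      exact absurd (csInf_le hZ2bdd ⟨⟨hz.1, hz.2.le.trans hr2mem.1.2⟩, hzz⟩) (not_le.mpr hz.2)
    have hneg2 : ∀ z ∈ Set.Ico r0 r2, w z < 0 := by
      intro z hz
      apply neg_of_no_zero cw hneg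
      intro t ht
      rw [Set.uIcc_comm, Set.uIcc_of_le hz.1] at ht
      exact hnoz2 t ⟨ht.1, lt_of_le_of_lt ht.2 hz.2⟩
    have hant2 : AntitoneOn (deriv w) (Set.Icc r0 r2) :=
      key r0 r2 hr0 (fun x hx => hneg2 x ⟨hx.1.le, hx.2⟩)
    obtain ⟨c2, hc2, hc2eq⟩ := exists_hasDerivAt_eq_slope w (deriv w) hr0r2
      cw.continuousOn (fun x _ => (dw x).hasDerivAt)
    have hc2pos : 0 < deriv w c2 := by
      rw [hc2eq, hr2z]
      apply div_pos (by linarith) (by linarith [hc2.1, hc2.2])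
    have : deriv w c2 ≤ deriv w r0 :=
      hant2 ⟨le_refl r0, hr0r2.le⟩ ⟨hc2.1.le, hc2.2.le⟩ hc2.1.le
    linarith
  have hnegAll : ∀ x ∈ Set.Ioi r0, w x < 0 := by
    intro x hx
    apply neg_of_no_zero cw hneg
    intro y hy
    rw [Set.uIcc_comm, Set.uIcc_of_le (le_of_lt hx)] at hy
    exact hnz2 y hy.1
  have hant3 : AntitoneOn (deriv w) (Set.Ici r0) := key2 r0 hr0 hnegAll
  have hfin : (1:ℝ) ≤ deriv w r0 := by
    apply le_of_tendsto hnorm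
    filter_upwards [eventually_ge_atTop r0] with x hx
    exact hant3 (Set.mem_Ici.mpr (le_refl r0)) (Set.mem_Ici.mpr hx) hx
  linarith

/-- Lower bound on the scattering length difference under truncation:
`a - at' ≥ ½ ∫_{max(Rt,a)}^∞ v(r)(r-a)² dr`. -/
theorem stmt_7 (v u : ℝ → ℝ) (a : ℝ) (Rt : ℝ) (hR : 0 < Rt)
    (hv : ∀ r, 0 < r → 0 ≤ v r)
    (hu : ContDiff ℝ 2 u) (h0 : u 0 = 0)
    (hODE : ∀ r, 0 < r → deriv (deriv u) r = (1 / 2) * v r * u r)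
    (hnorm : Tendsto (deriv u) atTop (nhds 1))
    (hscat : Tendsto (fun r => r - u r / deriv u r) atTop (nhds a))
    (ut : ℝ → ℝ) (at' : ℝ)
    (hut : ContDiff ℝ 2 ut) (h0' : ut 0 = 0)
    (hODE' : ∀ r, 0 < r →
      deriv (deriv ut) r = (1 / 2) * (if r ≤ Rt then v r else 0) * ut r)
    (hnorm' : Tendsto (deriv ut) atTop (nhds 1))
    (hscat' : Tendsto (fun r => r - ut r / deriv ut r) atTop (nhds at')) :
    2⁻¹ * ∫⁻ r in Set.Ioi (max Rt a), ENNReal.ofReal (v r * (r - a) ^ 2)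
      ≤ ENNReal.ofReal (a - at') := by
  obtain ⟨du, du', cu''⟩ := cd2 hu
  obtain ⟨dut, dut', cut''⟩ := cd2 hut
  -- nonnegativity of the solutions
  have hu0 : ∀ r, 0 ≤ r → 0 ≤ u r :=
    sol_nonneg (h := fun r => 1 / 2 * v r) hu h0
      (fun r hr => by have := hv r hr; positivity) hODE hnorm
  have hut0 : ∀ r, 0 ≤ r → 0 ≤ ut r :=
    sol_nonneg (h := fun r => 1 / 2 * (if r ≤ Rt then v r else 0)) hut h0'
      (fun r hr => by have := hv r hr; split <;> positivity) hODE' hnorm'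
  -- monotonicity of deriv u on [0,oo)
  have hu'mono : MonotoneOn (deriv u) (Set.Ici 0) := by
    apply monotoneOn_of_deriv_nonneg (convex_Ici 0) du'.continuous.continuousOn
      du'.differentiableOn
    intro x hx
    rw [interior_Ici] at hx
    rw [hODE x hx]
    have := hv x hx
    have := hu0 x hx.le
    positivity
  -- ut is linear beyond Rt
  have hut'const : ∀ s t : ℝ, Rt < s → s ≤ t → deriv ut t = deriv ut s := by
    intro s t hs hst
    rcases hst.eq_or_lt with h | hlt
    · rw [h]
    have hzero : ∀ x ∈ Set.Ioo s t, deriv (deriv ut) x = 0 := by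
      intro x hx
      rw [hODE' x (hR.trans (hs.trans hx.1)), if_neg (not_le.mpr (hs.trans hx.1))]
      ring
    have hmono : MonotoneOn (deriv ut) (Set.Icc s t) := by
      apply monotoneOn_of_deriv_nonneg (convex_Icc s t) dut'.continuous.continuousOn
        dut'.differentiableOn
      intro x hx; rw [interior_Icc] at hx; exact le_of_eq (hzero x hx).symm
    have hanti : AntitoneOn (deriv ut) (Set.Icc s t) := by
      apply antitoneOn_of_deriv_nonpos (convex_Icc s t) dut'.continuous.continuousOn
        dut'.differentiableOn
      intro x hx; rw [interior_Icc] at hx; exact le_of_eq (hzero x hx)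
    exact le_antisymm (hanti ⟨le_refl s, hst⟩ ⟨hst, le_refl t⟩ hst)
      (hmono ⟨le_refl s, hst⟩ ⟨hst, le_refl t⟩ hst)
  have hut'1 : ∀ s, Rt < s → deriv ut s = 1 := by
    intro s hs
    have hc : Tendsto (fun _ : ℝ => deriv ut s) atTop (nhds 1) := by
      apply hnorm'.congr'
      filter_upwards [eventually_ge_atTop s] with t ht
      exact hut'const s t hs ht
    exact tendsto_nhds_unique tendsto_const_nhds hc
  have hutlin : ∀ s, Rt < s → ut s = s - at' := by
    intro s hs
    have hdiff : ∀ t, s ≤ t → ut t - t = ut s - s := by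
      intro t hst
      rcases hst.eq_or_lt with h | hlt
      · rw [h]
      have hd0 : ∀ x ∈ Set.Ioo s t, deriv (fun y => ut y - y) x = 0 := by
        intro x hx
        have hD : HasDerivAt (fun y => ut y - y) (deriv ut x - 1) x :=
          (dut x).hasDerivAt.sub (hasDerivAt_id x)
        rw [hD.deriv, hut'1 x (hs.trans hx.1), sub_self]
      have hcont : ContinuousOn (fun y => ut y - y) (Set.Icc s t) :=
        (dut.continuous.sub continuous_id).continuousOn
      have hdiffon : DifferentiableOn ℝ (fun y => ut y - y) (interior (Set.Icc s t)) :=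
        (dut.sub differentiable_id).differentiableOn
      have hmono := monotoneOn_of_deriv_nonneg (convex_Icc s t) hcont hdiffon
        (fun x hx => by rw [interior_Icc] at hx; exact le_of_eq (hd0 x hx).symm)
      have hanti := antitoneOn_of_deriv_nonpos (convex_Icc s t) hcont hdiffon
        (fun x hx => by rw [interior_Icc] at hx; exact le_of_eq (hd0 x hx))
      exact le_antisymm (hanti ⟨le_refl s, hst⟩ ⟨hst, le_refl t⟩ hst)
        (hmono ⟨le_refl s, hst⟩ ⟨hst, le_refl t⟩ hst)
    have hc : Tendsto (fun _ : ℝ => s - ut s) atTop (nhds at') := by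
      apply hscat'.congr'
      filter_upwards [eventually_ge_atTop s, eventually_gt_atTop Rt] with t hts htR
      rw [hut'1 t htR]
      have := hdiff t hts
      field_simp
      linarith
    have h5 : at' = s - ut s := tendsto_nhds_unique hc tendsto_const_nhds
    linarith
  set g' : ℝ → ℝ := fun x => deriv (deriv u) x * ut x - u x * deriv (deriv ut) x with hg'def
  set Om : ℝ → ℝ := fun r => deriv u r * ut r - u r * deriv ut r with hOmdef
  have hOmd : ∀ x : ℝ, HasDerivAt Om (g' x) x := by
    intro x
    have h1 := ((du' x).hasDerivAt.mul (dut x).hasDerivAt)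
    have h2 := ((du x).hasDerivAt.mul (dut' x).hasDerivAt)
    have h3 := h1.sub h2
    convert h3 using 1
    · rfl
    · rfl
    · rfl
    simp only [hg'def]
    ring
  have hOmcont : Continuous Om :=
    (du'.continuous.mul dut.continuous).sub (du.continuous.mul dut'.continuous)
  have hg'nonneg : ∀ x, 0 < x → 0 ≤ g' x := by
    intro x hx
    simp only [hg'def]
    rw [hODE x hx, hODE' x hx]
    by_cases hxR : x ≤ Rt
    · rw [if_pos hxR]
      have h6 : 1 / 2 * v x * u x * ut x - u x * (1 / 2 * v x * ut x) = 0 := by ring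
      linarith
    · rw [if_neg hxR]
      have h7 : 0 ≤ 1 / 2 * v x * u x * ut x := by
        have := hv x hx; have := hu0 x hx.le; have := hut0 x hx.le; positivity
      have h8 : u x * (1 / 2 * 0 * ut x) = 0 := by ring
      linarith
  have hOmmono : MonotoneOn Om (Set.Ici 0) := by
    apply monotoneOn_of_deriv_nonneg (convex_Ici 0) hOmcont.continuousOn
      (fun x hx => (hOmd x).differentiableAt.differentiableWithinAt)
    intro x hx
    rw [interior_Ici] at hx
    rw [(hOmd x).deriv]
    exact hg'nonneg x hx
  have hOm0 : Om 0 = 0 := by simp only [hOmdef]; rw [h0, h0']; ring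
  have hOmtend : Tendsto Om atTop (nhds (a - at')) := by
    have h1 : Tendsto (fun r => deriv u r * ((r - u r / deriv u r) - at')) atTop
        (nhds (1 * (a - at'))) := hnorm.mul (hscat.sub tendsto_const_nhds)
    rw [one_mul] at h1
    apply h1.congr'
    filter_upwards [eventually_gt_atTop Rt,
      hnorm.eventually (eventually_gt_nhds (by norm_num : (0:ℝ) < 1))] with r hr hr'
    have hne : deriv u r ≠ 0 := ne_of_gt hr'
    simp only [hOmdef]
    rw [hutlin r hr, hut'1 r hr]
    field_simp
    ring
  have hOmle : ∀ r, 0 ≤ r → Om r ≤ a - at' := by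
    intro r hr
    apply ge_of_tendsto hOmtend
    filter_upwards [eventually_ge_atTop r] with s hs
    exact hOmmono (Set.mem_Ici.mpr hr) (Set.mem_Ici.mpr (hr.trans hs)) hs
  have hat : at' ≤ a := by have h9 := hOmle 0 le_rfl; rw [hOm0] at h9; linarith
  -- lower bound u s ≥ s - a
  have hua : ∀ s, 0 ≤ s → s - a ≤ u s := by
    intro s hs
    have h1 : Tendsto (fun r => deriv u r * (s - (r - u r / deriv u r))) atTop
        (nhds (1 * (s - a))) := hnorm.mul (tendsto_const_nhds.sub hscat)
    rw [one_mul] at h1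
    refine le_of_tendsto h1 ?_
    filter_upwards [eventually_gt_atTop s,
      hnorm.eventually (eventually_gt_nhds (by norm_num : (0:ℝ) < 1))] with r hrs hr'
    obtain ⟨c, hc, hceq⟩ := exists_hasDerivAt_eq_slope u (deriv u) hrs
      du.continuous.continuousOn (fun x _ => (du x).hasDerivAt)
    have hcr : deriv u c ≤ deriv u r :=
      hu'mono (Set.mem_Ici.mpr (hs.trans hc.1.le)) (Set.mem_Ici.mpr (hs.trans hrs.le)) hc.2.le
    have hrs' : (0:ℝ) < r - s := sub_pos.mpr hrs
    have h2 : u r - u s = deriv u c * (r - s) := by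
      rw [hceq]; field_simp
    have h3 : u r - u s ≤ deriv u r * (r - s) := by
      rw [h2]; exact mul_le_mul_of_nonneg_right hcr hrs'.le
    have hne : deriv u r ≠ 0 := ne_of_gt hr'
    have expand : deriv u r * (s - (r - u r / deriv u r)) = deriv u r * (s - r) + u r := by
      field_simp; ring
    have h4 : deriv u r * (s - r) = -(deriv u r * (r - s)) := by ring
    rw [expand]
    linarith
  -- the integral estimate
  set M : ℝ := max Rt a with hMdef
  have hMRt : Rt ≤ M := le_max_left _ _
  have hMa : a ≤ M := le_max_right _ _
  have hMpos : 0 < M := lt_of_lt_of_le hR hMRt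
  have hderivM : ∀ x ∈ Set.Ici M, HasDerivAt Om (g' x) x := fun x _ => hOmd x
  have hposM : ∀ x ∈ Set.Ioi M, 0 ≤ g' x := fun x hx => hg'nonneg x (hMpos.trans hx)
  have hint : ∫ x in Set.Ioi M, g' x = (a - at') - Om M :=
    integral_Ioi_of_hasDerivAt_of_nonneg' hderivM hposM hOmtend
  have hIntOn : IntegrableOn g' (Set.Ioi M) :=
    integrableOn_Ioi_deriv_of_nonneg' hderivM hposM hOmtend
  have hOmM : 0 ≤ Om M := by
    have h10 := hOmmono (Set.mem_Ici.mpr (le_refl 0)) (Set.mem_Ici.mpr hMpos.le) hMpos.le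
    rw [hOm0] at h10; exact h10
  have hintle : ∫ x in Set.Ioi M, g' x ≤ a - at' := by rw [hint]; linarith
  have hae : 0 ≤ᵐ[volume.restrict (Set.Ioi M)] g' :=
    (ae_restrict_iff' measurableSet_Ioi).mpr (ae_of_all _ fun x hx => hposM x hx)
  have lint_eq : ∫⁻ x in Set.Ioi M, ENNReal.ofReal (g' x)
      = ENNReal.ofReal (∫ x in Set.Ioi M, g' x) :=
    (ofReal_integral_eq_lintegral_ofReal hIntOn hae).symm
  have hptwise : ∀ x ∈ Set.Ioi M,
      ENNReal.ofReal (v x * (x - a) ^ 2) ≤ 2 * ENNReal.ofReal (g' x) := by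
    intro x hx
    have hx0 : (0:ℝ) < x := hMpos.trans hx
    have hxR : ¬ x ≤ Rt := not_le.mpr (lt_of_le_of_lt hMRt hx)
    have hreal : v x * (x - a) ^ 2 ≤ 2 * g' x := by
      have h1 : (0:ℝ) ≤ x - a := by have := lt_of_le_of_lt hMa hx; linarith
      have h2 : x - a ≤ u x := hua x hx0.le
      have h3 : x - a ≤ x - at' := by linarith
      have hvx : 0 ≤ v x := hv x hx0
      have keyI : (x - a) * (x - a) ≤ u x * (x - at') := mul_le_mul h2 h3 h1 (h1.trans h2)
      have hg'eq : 2 * g' x = v x * (u x * (x - at')) := by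
        simp only [hg'def]
        rw [hODE x hx0, hODE' x hx0, if_neg hxR, hutlin x (lt_of_le_of_lt hMRt hx)]
        ring
      calc v x * (x - a) ^ 2 = v x * ((x - a) * (x - a)) := by ring
        _ ≤ v x * (u x * (x - at')) := mul_le_mul_of_nonneg_left keyI hvx
        _ = 2 * g' x := hg'eq.symm
    calc ENNReal.ofReal (v x * (x - a) ^ 2) ≤ ENNReal.ofReal (2 * g' x) :=
          ENNReal.ofReal_le_ofReal hreal
      _ = 2 * ENNReal.ofReal (g' x) := by
          rw [ENNReal.ofReal_mul (by norm_num : (0:ℝ) ≤ 2)]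
          norm_num
  have haeptwise : ∀ᵐ x ∂(volume.restrict (Set.Ioi M)),
      ENNReal.ofReal (v x * (x - a) ^ 2) ≤ 2 * ENNReal.ofReal (g' x) :=
    (ae_restrict_iff' measurableSet_Ioi).mpr (ae_of_all _ hptwise)
  calc 2⁻¹ * ∫⁻ r in Set.Ioi M, ENNReal.ofReal (v r * (r - a) ^ 2)
      ≤ 2⁻¹ * ∫⁻ r in Set.Ioi M, 2 * ENNReal.ofReal (g' r) :=
        mul_le_mul_right (lintegral_mono_ae haeptwise) _
    _ = 2⁻¹ * (2 * ∫⁻ r in Set.Ioi M, ENNReal.ofReal (g' r)) := by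
        rw [lintegral_const_mul' 2 _ (by norm_num : (2:ENNReal) ≠ ⊤)]
    _ = ∫⁻ r in Set.Ioi M, ENNReal.ofReal (g' r) := by
        rw [← mul_assoc, ENNReal.inv_mul_cancel (by norm_num) (by norm_num), one_mul]
    _ = ENNReal.ofReal (∫ x in Set.Ioi M, g' x) := lint_eq
    _ ≤ ENNReal.ofReal (a - at') := ENNReal.ofReal_le_ofReal hintle
end

section
/- Explicit Thomas-Fermi minimizer: for V homogeneous of degree s and a = 1, the unique minimizer of F[ρ] = ∫(Vρ + 4πρ²) under ∫ρ = 1 is ρ(x) = (8π)^{-1}[μ̃ - V(x)]₊, where μ̃ is chosen so that ∫ρ = 1, and μ̃ = F(1,1) + 4π∫ρ². -/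
open Real MeasureTheory

/-- Explicit Thomas-Fermi minimizer: for `a = 1`, the unique minimizer of
`F[ρ] = ∫(Vρ + 4πρ²)` under `∫ρ = 1` is `ρ = (8π)⁻¹[mu - V]₊` with `mu` fixed by
the normalization, and `mu = F(1,1) + 4π∫ρ²`. -/
theorem stmt_11 (V : EuclideanSpace ℝ (Fin 3) → ℝ)
    (hVc : Continuous V) (hV0 : ∀ x, 0 ≤ V x)
    (s : ℝ) (hs : 0 < s)
    (hhom : ∀ lam : ℝ, 0 < lam → ∀ x, V (lam • x) = lam ^ s * V x)
    (hlevel : ∀ c : ℝ, 0 < c →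
      volume {x : EuclideanSpace ℝ (Fin 3) | V x < c} ≠ 0 ∧
      volume {x : EuclideanSpace ℝ (Fin 3) | V x < c} < ⊤)
    (mu : ℝ) (ρ : EuclideanSpace ℝ (Fin 3) → ℝ)
    (hρ : ρ = fun x => (8 * π)⁻¹ * max (mu - V x) 0)
    (hint : Integrable ρ) (hnorm : (∫ x, ρ x) = 1) :
    (∀ σ : EuclideanSpace ℝ (Fin 3) → ℝ, (∀ x, 0 ≤ σ x) → Integrable σ →
      Integrable (fun x => V x * σ x) → Integrable (fun x => (σ x) ^ 2) →
      (∫ x, σ x) = 1 →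
      (∫ x, (V x * ρ x + 4 * π * (ρ x) ^ 2)) ≤ ∫ x, (V x * σ x + 4 * π * (σ x) ^ 2)) ∧
    (∀ σ : EuclideanSpace ℝ (Fin 3) → ℝ, (∀ x, 0 ≤ σ x) → Integrable σ →
      Integrable (fun x => V x * σ x) → Integrable (fun x => (σ x) ^ 2) →
      (∫ x, σ x) = 1 →
      (∫ x, (V x * σ x + 4 * π * (σ x) ^ 2)) = (∫ x, (V x * ρ x + 4 * π * (ρ x) ^ 2)) →
      σ =ᵐ[volume] ρ) ∧
    mu = (∫ x, (V x * ρ x + 4 * π * (ρ x) ^ 2)) + 4 * π * ∫ x, (ρ x) ^ 2 := by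
  have hπ : (0:ℝ) < π := Real.pi_pos
  have h8π : (0:ℝ) < 8 * π := by positivity
  have hρx : ∀ x, ρ x = (8 * π)⁻¹ * max (mu - V x) 0 := fun x => by rw [hρ]
  have hρ0 : ∀ x, 0 ≤ ρ x := fun x => by
    rw [hρx]
    exact mul_nonneg (inv_nonneg.mpr h8π.le) (le_max_right _ _)
  have hρc : Continuous ρ := by
    rw [hρ]
    exact continuous_const.mul ((continuous_const.sub hVc).max continuous_const)
  -- mu must be positive
  have hμpos : 0 < mu := by
    by_contra h
    push_neg at h
    have hz : ∀ x, ρ x = 0 := fun x => by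
      rw [hρx, max_eq_right (by linarith [hV0 x]), mul_zero]
    have : (∫ x, ρ x) = 0 := by
      simp only [hz, integral_zero]
    linarith [hnorm, this]
  have hρle : ∀ x, ρ x ≤ (8 * π)⁻¹ * mu := fun x => by
    rw [hρx]
    apply mul_le_mul_of_nonneg_left _ (inv_nonneg.mpr h8π.le)
    exact max_le (by linarith [hV0 x]) hμpos.le
  have hVρle : ∀ x, V x * ρ x ≤ mu * ρ x := by
    intro x
    rcases le_or_gt (V x) mu with h | h
    · exact mul_le_mul_of_nonneg_right h (hρ0 x)
    · have : ρ x = 0 := by rw [hρx, max_eq_right (by linarith), mul_zero]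
      rw [this]; simp
  -- integrability of ρ² and Vρ
  have hρsq : Integrable (fun x => (ρ x) ^ 2) := by
    apply (hint.const_mul ((8 * π)⁻¹ * mu)).mono' ((hρc.pow 2).aestronglyMeasurable)
    filter_upwards with x
    rw [Real.norm_eq_abs, abs_of_nonneg (sq_nonneg _)]
    have := hρ0 x
    have := hρle x
    rw [Pi.pow_apply]; nlinarith
  have hVρ : Integrable (fun x => V x * ρ x) := by
    apply (hint.const_mul mu).mono' ((hVc.mul hρc).aestronglyMeasurable)
    filter_upwards with x
    rw [Real.norm_eq_abs, Pi.mul_apply, abs_of_nonneg (mul_nonneg (hV0 x) (hρ0 x))]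
    exact hVρle x
  have hfρ : Integrable (fun x => V x * ρ x + 4 * π * (ρ x) ^ 2) :=
    hVρ.add (hρsq.const_mul _)
  -- key pointwise identity
  have keyid : ∀ (x) (t : ℝ),
      V x * t + 4 * π * t ^ 2 =
        (V x * ρ x + 4 * π * (ρ x) ^ 2) + mu * (t - ρ x) +
          (max (V x - mu) 0 * t + 4 * π * (t - ρ x) ^ 2) := by
    intro x t
    rcases le_or_gt (V x) mu with h | h
    · have h1 : ρ x = (8 * π)⁻¹ * (mu - V x) := by
        rw [hρx, max_eq_left (by linarith)]
      have h2 : max (V x - mu) 0 = 0 := max_eq_right (by linarith)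
      rw [h1, h2]
      field_simp
      ring
    · have h1 : ρ x = 0 := by rw [hρx, max_eq_right (by linarith), mul_zero]
      have h2 : max (V x - mu) 0 = V x - mu := max_eq_left (by linarith)
      rw [h1, h2]
      ring
  -- main lemma handling both minimality and uniqueness
  have main : ∀ σ : EuclideanSpace ℝ (Fin 3) → ℝ, (∀ x, 0 ≤ σ x) → Integrable σ →
      Integrable (fun x => V x * σ x) → Integrable (fun x => (σ x) ^ 2) →
      (∫ x, σ x) = 1 →
      ((∫ x, (V x * ρ x + 4 * π * (ρ x) ^ 2)) ≤ ∫ x, (V x * σ x + 4 * π * (σ x) ^ 2)) ∧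
      ((∫ x, (V x * σ x + 4 * π * (σ x) ^ 2)) = (∫ x, (V x * ρ x + 4 * π * (ρ x) ^ 2)) →
        σ =ᵐ[volume] ρ) := by
    intro σ hσ0 hσint hVσ hσsq hσnorm
    set g : EuclideanSpace ℝ (Fin 3) → ℝ :=
      fun x => max (V x - mu) 0 * σ x + 4 * π * (σ x - ρ x) ^ 2 with hg
    have hg_eq : g = fun x =>
        (V x * σ x + 4 * π * (σ x) ^ 2) - (V x * ρ x + 4 * π * (ρ x) ^ 2)
          - mu * (σ x - ρ x) := by
      funext x
      have := keyid x (σ x)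
      simp only [hg]
      linarith
    have hfσ : Integrable (fun x => V x * σ x + 4 * π * (σ x) ^ 2) :=
      hVσ.add (hσsq.const_mul _)
    have hg_int : Integrable g := by
      rw [hg_eq]
      exact (hfσ.sub hfρ).sub ((hσint.sub hint).const_mul mu)
    have hg_nonneg : ∀ x, 0 ≤ g x := fun x => by
      have h1 : 0 ≤ max (V x - mu) 0 * σ x :=
        mul_nonneg (le_max_right _ _) (hσ0 x)
      have h2 : 0 ≤ 4 * π * (σ x - ρ x) ^ 2 := by positivity
      simp only [hg]
      linarith
    have hμσρ : Integrable (fun x => mu * (σ x - ρ x)) := by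
      have h := hσint.sub hint
      exact h.const_mul mu
    have e1 : (∫ x, ((V x * σ x + 4 * π * (σ x) ^ 2) - (V x * ρ x + 4 * π * (ρ x) ^ 2)
          - mu * (σ x - ρ x)))
        = (∫ x, ((V x * σ x + 4 * π * (σ x) ^ 2) - (V x * ρ x + 4 * π * (ρ x) ^ 2)))
          - ∫ x, mu * (σ x - ρ x) := integral_sub (hfσ.sub hfρ) hμσρ
    have e2 : (∫ x, ((V x * σ x + 4 * π * (σ x) ^ 2) - (V x * ρ x + 4 * π * (ρ x) ^ 2)))
        = (∫ x, (V x * σ x + 4 * π * (σ x) ^ 2)) - ∫ x, (V x * ρ x + 4 * π * (ρ x) ^ 2) :=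
      integral_sub hfσ hfρ
    have e3 : (∫ x, mu * (σ x - ρ x)) = mu * ∫ x, (σ x - ρ x) := by
      rw [integral_const_mul]
    have e4 : (∫ x, (σ x - ρ x)) = (∫ x, σ x) - ∫ x, ρ x := integral_sub hσint hint
    have hg_val : (∫ x, g x) =
        (∫ x, (V x * σ x + 4 * π * (σ x) ^ 2)) -
          (∫ x, (V x * ρ x + 4 * π * (ρ x) ^ 2)) := by
      rw [hg_eq]
      rw [e4, hσnorm, hnorm] at e3
      simp only [sub_self, mul_zero] at e3
      rw [e1, e2, e3, sub_zero]
    constructor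
    · have h0 : 0 ≤ ∫ x, g x := integral_nonneg hg_nonneg
      linarith [hg_val]
    · intro heq
      have h0 : (∫ x, g x) = 0 := by rw [hg_val, heq]; ring
      have hae : g =ᵐ[volume] 0 :=
        (integral_eq_zero_iff_of_nonneg hg_nonneg hg_int).mp h0
      filter_upwards [hae] with x hx
      have h1 : 0 ≤ max (V x - mu) 0 * σ x :=
        mul_nonneg (le_max_right _ _) (hσ0 x)
      have h2 : (σ x - ρ x) ^ 2 = 0 := by
        have hx' : max (V x - mu) 0 * σ x + 4 * π * (σ x - ρ x) ^ 2 = 0 := hx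
        nlinarith [sq_nonneg (σ x - ρ x)]
      have := pow_eq_zero_iff (n := 2) (by norm_num) |>.mp h2
      linarith [sub_eq_zero.mp this]
  refine ⟨fun σ h1 h2 h3 h4 h5 => (main σ h1 h2 h3 h4 h5).1,
    fun σ h1 h2 h3 h4 h5 heq => (main σ h1 h2 h3 h4 h5).2 heq, ?_⟩
  -- the formula for mu
  have key3 : ∀ x, V x * ρ x + 4 * π * (ρ x) ^ 2 + 4 * π * (ρ x) ^ 2 = mu * ρ x := by
    intro x
    rcases le_or_gt (V x) mu with h | h
    · have h1 : ρ x = (8 * π)⁻¹ * (mu - V x) := by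
        rw [hρx, max_eq_left (by linarith)]
      rw [h1]
      field_simp
      ring
    · have h1 : ρ x = 0 := by rw [hρx, max_eq_right (by linarith), mul_zero]
      rw [h1]; ring
  have : (∫ x, (V x * ρ x + 4 * π * (ρ x) ^ 2)) + 4 * π * (∫ x, (ρ x) ^ 2) = mu := by
    calc (∫ x, (V x * ρ x + 4 * π * (ρ x) ^ 2)) + 4 * π * (∫ x, (ρ x) ^ 2)
        = (∫ x, (V x * ρ x + 4 * π * (ρ x) ^ 2)) + ∫ x, 4 * π * (ρ x) ^ 2 := by
          rw [integral_const_mul]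
      _ = ∫ x, ((V x * ρ x + 4 * π * (ρ x) ^ 2) + 4 * π * (ρ x) ^ 2) :=
          (integral_add hfρ (hρsq.const_mul _)).symm
      _ = ∫ x, mu * ρ x := by
          congr 1; funext x; exact key3 x
      _ = mu := by rw [integral_const_mul, hnorm, mul_one]
  linarith [this]
end

section
/- Volume exclusion integral bound: with f as in the Dyson trial function (f(r) = (1+ε)u(r)/r for r ≤ b, f = 1 for r > b, u the zero-energy scattering solution with scattering length a < b), I := ∫_{ℝ³}(1 - f(|x|)²)d³x ≤ 4π(a³/3 + ab(b-a)). -/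
open Real MeasureTheory Set

lemma aux_gamma : Real.Gamma ((3:ℝ)/2 + 1) = 3/4 * Real.sqrt π := by
  rw [Real.Gamma_add_one (by norm_num)]
  have h32 : (3:ℝ)/2 = 1/2 + 1 := by norm_num
  rw [h32, Real.Gamma_add_one (by norm_num), Real.Gamma_one_half_eq]
  ring

lemma aux_ball_vol :
    (volume (Metric.ball (0 : EuclideanSpace ℝ (Fin 3)) 1)).toReal = 4/3 * π := by
  rw [EuclideanSpace.volume_ball]
  have hcard : (Fintype.card (Fin 3) : ℝ) = 3 := by simp
  have hs : Real.sqrt π ≠ 0 := (Real.sqrt_pos.mpr pi_pos).ne'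
  have h3 : Real.sqrt π ^ Fintype.card (Fin 3) / Real.Gamma (Fintype.card (Fin 3) / 2 + 1)
      = 4/3 * π := by
    simp only [Fintype.card_fin]
    have : ((3:ℕ):ℝ) = (3:ℝ) := by norm_num
    rw [this, aux_gamma]
    have hsq : Real.sqrt π ^ 3 = π * Real.sqrt π := by
      rw [pow_succ, Real.sq_sqrt pi_pos.le]
    rw [hsq]
    field_simp
  rw [h3]
  simp [ENNReal.toReal_ofReal, ENNReal.toReal_mul]
  positivity

/-- Volume exclusion integral bound for the Dyson trial function:
`I = ∫(1 - f(|x|)²) ≤ 4π(a³/3 + ab(b-a))`. -/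
theorem stmt_19 (v u : ℝ → ℝ) (a b : ℝ) (ha : 0 < a) (hab : a < b)
    (hv : ∀ r, 0 < r → 0 ≤ v r)
    (h0 : u 0 = 0)
    (hODE : ∀ r, 0 < r → deriv (deriv u) r = (1 / 2) * v r * u r)
    (hub : ∀ r, 0 < r → u r ≤ r)
    (hlb : ∀ r, 0 < r → max (r - a) 0 ≤ u r)
    (hd0 : ∀ r, 0 < r → 0 ≤ deriv u r)
    (hd1 : ∀ r, 0 < r → deriv u r ≤ 1)
    (hdlb : ∀ r, a < r → 1 - a / r ≤ deriv u r) :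
    (∫ x : EuclideanSpace ℝ (Fin 3),
        (1 - ((if ‖x‖ ≤ b then (1 + (b / u b - 1)) * u ‖x‖ / ‖x‖ else 1)) ^ 2))
      ≤ 4 * π * (a ^ 3 / 3 + a * b * (b - a)) := by
  have hb : 0 < b := ha.trans hab
  have hubpos : 0 < u b := lt_of_lt_of_le (by linarith) ((le_max_left _ _).trans (hlb b hb))
  have hub' : u b ≤ b := hub b hb
  have hRHS : 0 ≤ 4 * π * (a ^ 3 / 3 + a * b * (b - a)) := by
    have h1 : (0:ℝ) ≤ a ^ 3 / 3 + a * b * (b - a) := by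
      nlinarith [pow_pos ha 3, mul_pos (mul_pos ha hb) (sub_pos.mpr hab)]
    have h2 : (0:ℝ) ≤ 4 * π := by positivity
    exact mul_nonneg h2 h1
  set F : EuclideanSpace ℝ (Fin 3) → ℝ := fun x =>
    1 - ((if ‖x‖ ≤ b then (1 + (b / u b - 1)) * u ‖x‖ / ‖x‖ else 1)) ^ 2 with hF
  by_cases hInt : Integrable F
  swap
  · rw [show (∫ x : EuclideanSpace ℝ (Fin 3),
        (1 - ((if ‖x‖ ≤ b then (1 + (b / u b - 1)) * u ‖x‖ / ‖x‖ else 1)) ^ 2)) = ∫ x, F x from rfl,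
      integral_undef hInt]
    exact hRHS
  -- the dominating radial profile
  set g : ℝ → ℝ := fun r => if r ≤ a then 1 else if r ≤ b then 1 - ((r - a)/r)^2 else 0 with hg
  have hgmeas : Measurable g := by
    apply Measurable.ite (measurableSet_le measurable_id measurable_const) measurable_const
    apply Measurable.ite (measurableSet_le measurable_id measurable_const) _ measurable_const
    fun_prop
  -- pointwise bound F ≤ g ∘ ‖·‖
  have hpt : ∀ x : EuclideanSpace ℝ (Fin 3), F x ≤ g ‖x‖ := by
    intro x
    set r := ‖x‖ with hr
    have hr0 : 0 ≤ r := norm_nonneg x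
    by_cases hrb : r ≤ b
    · rcases le_or_gt r a with hra | hra
      · simp only [hF, hg, if_pos hra]
        nlinarith [sq_nonneg ((if r ≤ b then (1 + (b / u b - 1)) * u r / r else 1))]
      · have hrpos : 0 < r := ha.trans hra
        simp only [hF, hg, if_neg (not_le.mpr hra), if_pos hrb]
        have hur : r - a ≤ u r := (le_max_left _ _).trans (hlb r hrpos)
        have hc1 : (1:ℝ) ≤ 1 + (b / u b - 1) := by
          have : (1:ℝ) ≤ b / u b := (one_le_div hubpos).mpr hub'
          linarith
        have hun : 0 ≤ u r := le_trans (by linarith) hur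
        have key : (r - a)/r ≤ (1 + (b / u b - 1)) * u r / r := by
          apply div_le_div_of_nonneg_right ?_ hr0
          nlinarith
        have h0' : 0 ≤ (r - a)/r := div_nonneg (by linarith) hr0
        have := pow_le_pow_left₀ h0' key 2
        rw [if_pos (show ‖x‖ ≤ b from hrb), ← hr]
        linarith
    · simp only [hF, hg, if_neg hrb, if_neg (fun h : r ≤ a => hrb (h.trans hab.le)), if_neg hrb]
      rw [if_neg (show ¬ ‖x‖ ≤ b from hrb)]
      norm_num
  -- |g| ≤ 1 on [0,b], g = 0 outside
  have hgbd : ∀ r : ℝ, 0 ≤ r → ‖g r‖ ≤ 1 := by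
    intro r hr0
    rcases le_or_gt r a with hra | hra
    · simp [hg, if_pos hra]
    rcases le_or_gt r b with hrb | hrb
    · have hrpos : 0 < r := ha.trans hra
      simp only [hg, if_neg (not_le.mpr hra), if_pos hrb, Real.norm_eq_abs]
      rw [abs_le]
      have h1 : (r - a)/r ≤ 1 := by
        rw [div_le_one hrpos]; linarith
      have h0' : 0 ≤ (r - a)/r := div_nonneg (by linarith) hr0
      constructor <;> nlinarith
    · simp [hg, if_neg (not_le.mpr hra), if_neg (not_le.mpr hrb)]
  have hgzero : ∀ r : ℝ, b < r → g r = 0 := by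
    intro r hr
    simp [hg, if_neg (not_le.mpr (hab.trans hr)), if_neg (not_le.mpr hr)]
  -- integrability of g ∘ ‖·‖
  have hGmeas : Measurable (fun x : EuclideanSpace ℝ (Fin 3) => g ‖x‖) :=
    hgmeas.comp measurable_norm
  have hGint : Integrable (fun x : EuclideanSpace ℝ (Fin 3) => g ‖x‖) := by
    apply Integrable.mono' (g := (Metric.closedBall (0 : EuclideanSpace ℝ (Fin 3)) b).indicator
      (fun _ => (1:ℝ)))
    · exact (integrable_indicator_iff measurableSet_closedBall).mpr
        (integrableOn_const measure_closedBall_lt_top.ne)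
    · exact hGmeas.aestronglyMeasurable
    · filter_upwards with x
      by_cases hx : ‖x‖ ≤ b
      · have hmem : x ∈ Metric.closedBall (0 : EuclideanSpace ℝ (Fin 3)) b := by
          simpa [Metric.mem_closedBall, dist_zero_right] using hx
        rw [indicator_of_mem hmem]
        exact hgbd _ (norm_nonneg x)
      · rw [hgzero _ (not_le.mp hx)]
        simp [norm_zero]
        exact indicator_nonneg (fun _ _ => zero_le_one) x
  -- main comparison
  have hmono : (∫ x, F x) ≤ ∫ x : EuclideanSpace ℝ (Fin 3), g ‖x‖ :=
    integral_mono hInt hGint hpt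
  -- compute ∫ g‖x‖ via spherical coordinates
  have hsph := MeasureTheory.integral_fun_norm_addHaar
    (volume : Measure (EuclideanSpace ℝ (Fin 3))) g
  rw [finrank_euclideanSpace_fin] at hsph
  -- compute the 1D integral
  have hI1 : (∫ y in Ioc (0:ℝ) a, y ^ (3-1) • g y) = a^3/3 := by
    rw [setIntegral_congr_fun measurableSet_Ioc
      (g := fun y => y^2) (by
        intro y hy
        simp [hg, if_pos hy.2, smul_eq_mul])]
    rw [← intervalIntegral.integral_of_le ha.le, integral_pow]
    norm_num
  have hI2 : (∫ y in Ioc a b, y ^ (3-1) • g y) = a*(b^2-a^2) - a^2*(b-a) := by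
    rw [setIntegral_congr_fun measurableSet_Ioc
      (g := fun y => 2*a*y - a^2) (by
        intro y hy
        have hy0 : 0 < y := ha.trans hy.1
        simp only [hg, if_neg (not_le.mpr hy.1), if_pos hy.2, smul_eq_mul]
        field_simp
        ring)]
    rw [← intervalIntegral.integral_of_le hab.le]
    rw [intervalIntegral.integral_sub (by apply Continuous.intervalIntegrable; fun_prop)
      (by apply Continuous.intervalIntegrable; fun_prop)]
    rw [intervalIntegral.integral_const_mul, integral_id,
      intervalIntegral.integral_const]
    simp only [smul_eq_mul]
    ring
  have hIb : (∫ y in Ioi b, y ^ (3-1) • g y) = 0 := by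
    rw [setIntegral_congr_fun measurableSet_Ioi
      (g := fun _ => (0:ℝ)) (by
        intro y hy
        simp [hgzero y hy, smul_eq_mul])]
    simp
  have hint1 : IntegrableOn (fun y => y ^ (3-1) • g y) (Ioc (0:ℝ) a) := by
    apply IntegrableOn.congr_fun ((continuous_pow 2).integrableOn_Ioc) ?_ measurableSet_Ioc
    intro y hy
    simp [hg, if_pos hy.2, smul_eq_mul]
  have hint2 : IntegrableOn (fun y => y ^ (3-1) • g y) (Ioc a b) := by
    apply IntegrableOn.congr_fun (f := fun y => 2*a*y - a^2) ?_ ?_ measurableSet_Ioc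
    · exact (by fun_prop : Continuous fun y : ℝ => 2*a*y - a^2).integrableOn_Ioc
    · intro y hy
      have hy0 : 0 < y := ha.trans hy.1
      simp only [hg, if_neg (not_le.mpr hy.1), if_pos hy.2, smul_eq_mul]
      field_simp
      ring
  have hintb : IntegrableOn (fun y => y ^ (3-1) • g y) (Ioi b) := by
    apply IntegrableOn.congr_fun (f := fun _ => (0:ℝ)) (integrableOn_zero) ?_ measurableSet_Ioi
    intro y hy
    simp [hgzero y hy]
  have hsplit : (∫ y in Ioi (0:ℝ), y ^ (3-1) • g y)
      = a^3/3 + (a*(b^2-a^2) - a^2*(b-a)) := by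
    rw [← Ioc_union_Ioi_eq_Ioi hb.le,
      setIntegral_union Ioc_disjoint_Ioi_same measurableSet_Ioi
        ?_ hintb, hIb, add_zero,
      ← Ioc_union_Ioc_eq_Ioc ha.le hab.le,
      setIntegral_union (Ioc_disjoint_Ioc_of_le le_rfl) measurableSet_Ioc hint1 hint2, hI1, hI2]
    rw [← Ioc_union_Ioc_eq_Ioc ha.le hab.le]
    exact hint1.union hint2
  rw [hsplit, measureReal_def, aux_ball_vol] at hsph
  calc (∫ x : EuclideanSpace ℝ (Fin 3),
        (1 - ((if ‖x‖ ≤ b then (1 + (b / u b - 1)) * u ‖x‖ / ‖x‖ else 1)) ^ 2))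
      ≤ ∫ x : EuclideanSpace ℝ (Fin 3), g ‖x‖ := hmono
    _ = (3:ℕ) • (4/3 * π) • (a^3/3 + (a*(b^2-a^2) - a^2*(b-a))) := hsph
    _ = 4 * π * (a ^ 3 / 3 + a * b * (b - a)) := by
        simp only [nsmul_eq_mul, smul_eq_mul, Nat.cast_ofNat]
        ring
end
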